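/- arXiv:1803.08293 — 6 statements merged into one kernel-verified Lean document; each statement's English description precedes it below -/
import Mathlib

section
/- Let ξ, ξ1, ξ2, ... be i.i.d. real random variables with E(ξ²) < ∞ and E(ξ) > 0, and let X_n = ξ1 + ... + ξ_n. Then E[X_n⁻] → 0 as n → ∞, where X_n⁻ = max(−X_n, 0) is the negative part. -/
open MeasureTheory ProbabilityTheory Filter

section Aux

variable {Ω : Type*} [MeasureSpace Ω] [IsProbabilityMeasure (ℙ : Measure Ω)]

lemma aux_integrable_of_bounded {f : Ω → ℝ} (hf : Measurable f) (C : ℝ)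
    (h : ∀ ω, |f ω| ≤ C) : Integrable f ℙ :=
  Integrable.mono' (integrable_const C) hf.aestronglyMeasurable
    (Filter.Eventually.of_forall fun ω => by simpa [Real.norm_eq_abs] using h ω)

lemma aux_arith {K4 m ε n : ℝ} (h : 48 * K4 < n * (m * ε)) :
    24 * K4 < ε / 2 * (m * n) := by linarith

lemma aux_neg_part_sq (v c : ℝ) (hc : 0 < c) : max (-(v + c)) 0 ≤ v ^ 2 / c := by
  rcases le_or_gt 0 (v + c) with h | h
  · rw [max_eq_right (neg_nonpos.mpr h)]; positivity
  · have hv : c < -v := by linarith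
    rw [max_eq_left (by linarith)]
    rw [le_div_iff₀ hc]
    nlinarith

lemma aux_neg_part_pow4 (w c : ℝ) (hc : 0 < c) : max (-(w + c)) 0 ≤ w ^ 4 / c ^ 3 := by
  rcases le_or_gt 0 (w + c) with h | h
  · rw [max_eq_right (neg_nonpos.mpr h)]; positivity
  · have hw : c < -w := by linarith
    rw [max_eq_left (by linarith)]
    rw [le_div_iff₀ (by positivity : (0:ℝ) < c ^ 3)]
    nlinarith [pow_le_pow_left₀ hc.le hw.le 3, sq_nonneg w, sq_nonneg c, sq_nonneg (w + c)]

lemma aux_key_ineq (w v c : ℝ) (hc : 0 < c) :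
    max (-(w + v + 2 * c)) 0 ≤ w ^ 4 / c ^ 3 + v ^ 2 / c := by
  have h1 := aux_neg_part_pow4 w c hc
  have h2 := aux_neg_part_sq v c hc
  have h3 : max (-(w + v + 2 * c)) 0 ≤ max (-(w + c)) 0 + max (-(v + c)) 0 := by
    apply max_le
    · have := le_max_left (-(w + c)) 0
      have := le_max_left (-(v + c)) 0
      linarith
    · have := le_max_right (-(w + c)) 0
      have := le_max_right (-(v + c)) 0
      linarith
  linarith

end Aux

section Moments

variable {Ω : Type*} [MeasureSpace Ω] [IsProbabilityMeasure (ℙ : Measure Ω)]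

lemma aux_sum_sq_le (Y : ℕ → Ω → ℝ) (hmeas : ∀ i, Measurable (Y i))
    (hindep : iIndepFun Y ℙ)
    (hL2 : ∀ i, MemLp (Y i) 2 ℙ) (hzero : ∀ i, ∫ ω, Y i ω = 0)
    (D : ℝ) (hD : ∀ i, ∫ ω, (Y i ω) ^ 2 ≤ D) (n : ℕ) :
    ∫ ω, (∑ i ∈ Finset.range n, Y i ω) ^ 2 ≤ n * D := by
  induction n with
  | zero => simp
  | succ n ih =>
    set S : Ω → ℝ := fun ω => ∑ i ∈ Finset.range n, Y i ω with hS
    have hSeq : S = ∑ i ∈ Finset.range n, Y i := by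
      funext ω; simp [hS]
    have hSmeas : Measurable S := by
      apply Finset.measurable_sum
      exact fun i _ => hmeas i
    have hSL2 : MemLp S 2 ℙ := by
      rw [hSeq]; exact memLp_finset_sum' _ (fun i _ => hL2 i)
    have hSint : Integrable S ℙ := hSL2.integrable one_le_two
    have hYint : Integrable (Y n) ℙ := (hL2 n).integrable one_le_two
    have hSY : IndepFun S (Y n) ℙ := by
      rw [hSeq]; exact hindep.indepFun_sum_range_succ hmeas n
    have hSYint : Integrable (fun ω => S ω * Y n ω) ℙ := hSY.integrable_mul hSint hYint
    have hS2int : Integrable (fun ω => S ω ^ 2) ℙ := hSL2.integrable_sq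
    have hY2int : Integrable (fun ω => Y n ω ^ 2) ℙ := (hL2 n).integrable_sq
    have hint2 : Integrable (fun ω => 2 * (S ω * Y n ω) + Y n ω ^ 2) ℙ :=
      (hSYint.const_mul 2).add hY2int
    have hexp : ∫ ω, (∑ i ∈ Finset.range (n+1), Y i ω) ^ 2
        = ∫ ω, (S ω ^ 2 + (2 * (S ω * Y n ω) + Y n ω ^ 2)) := by
      congr 1
      funext ω
      rw [Finset.sum_range_succ]
      simp only [hS]
      ring
    have h1 : ∫ ω, (S ω ^ 2 + (2 * (S ω * Y n ω) + Y n ω ^ 2))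
        = (∫ ω, S ω ^ 2) + ∫ ω, (2 * (S ω * Y n ω) + Y n ω ^ 2) :=
      integral_add hS2int hint2
    have h2 : ∫ ω, (2 * (S ω * Y n ω) + Y n ω ^ 2)
        = (∫ ω, 2 * (S ω * Y n ω)) + ∫ ω, Y n ω ^ 2 :=
      integral_add (hSYint.const_mul 2) hY2int
    have h3 : ∫ ω, 2 * (S ω * Y n ω) = 2 * ∫ ω, S ω * Y n ω := integral_const_mul 2 _
    have hmul : ∫ ω, S ω * Y n ω = (∫ ω, S ω) * ∫ ω, Y n ω :=
      hSY.integral_fun_mul_eq_mul_integral hSint.aestronglyMeasurable hYint.aestronglyMeasurable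
    have hz : ∫ ω, S ω * Y n ω = 0 := by rw [hmul, hzero n, mul_zero]
    have hDn := hD n
    rw [hexp, h1, h2, h3, hz]
    push_cast
    simp only [hS] at ih ⊢
    linarith

end Moments

lemma aux_sum_pow4_le {Ω : Type*} [MeasureSpace Ω] [IsProbabilityMeasure (ℙ : Measure Ω)]
    (Y : ℕ → Ω → ℝ) (hmeas : ∀ i, Measurable (Y i))
    (hindep : iIndepFun Y ℙ)
    (K : ℝ) (hK : 0 ≤ K) (hbdd : ∀ i ω, |Y i ω| ≤ K)
    (hzero : ∀ i, ∫ ω, Y i ω = 0) (n : ℕ) :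
    ∫ ω, (∑ i ∈ Finset.range n, Y i ω) ^ 4 ≤ 3 * n ^ 2 * K ^ 4 := by
  have hL2 : ∀ i, MemLp (Y i) 2 ℙ := fun i =>
    MemLp.of_bound (hmeas i).aestronglyMeasurable K
      (Filter.Eventually.of_forall fun ω => by simpa [Real.norm_eq_abs] using hbdd i ω)
  have hYsq : ∀ i, ∫ ω, (Y i ω) ^ 2 ≤ K ^ 2 := by
    intro i
    calc ∫ ω, (Y i ω) ^ 2 ≤ ∫ _ω, K ^ 2 := by
          apply integral_mono (hL2 i).integrable_sq (integrable_const _)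
          intro ω
          dsimp only
          have h2 : |Y i ω| ^ 2 ≤ K ^ 2 := pow_le_pow_left₀ (abs_nonneg _) (hbdd i ω) 2
          rwa [sq_abs] at h2
      _ = K ^ 2 := by simp
  induction n with
  | zero => simp
  | succ n ih =>
    have hsumsq := aux_sum_sq_le Y hmeas hindep hL2 hzero (K ^ 2) hYsq n
    set S : Ω → ℝ := fun ω => ∑ i ∈ Finset.range n, Y i ω with hSdef
    have hSeq : S = ∑ i ∈ Finset.range n, Y i := by funext ω; simp [hSdef]
    have hSmeas : Measurable S := Finset.measurable_sum _ (fun i _ => hmeas i)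
    have hSbdd : ∀ ω, |S ω| ≤ n * K := by
      intro ω
      calc |S ω| ≤ ∑ i ∈ Finset.range n, |Y i ω| := Finset.abs_sum_le_sum_abs _ _
        _ ≤ ∑ _i ∈ Finset.range n, K := Finset.sum_le_sum (fun i _ => hbdd i ω)
        _ = n * K := by simp [mul_comm]
    have hSY : IndepFun S (Y n) ℙ := by
      rw [hSeq]; exact hindep.indepFun_sum_range_succ hmeas n
    -- integrability of all pieces
    have habs_pm : ∀ (a b : ℝ) (k m : ℕ), |a| ≤ n * K → |b| ≤ K →
        |a ^ k * b ^ m| ≤ (n * K) ^ k * K ^ m := by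
      intro a b k m ha hb
      rw [abs_mul, abs_pow, abs_pow]
      have h1 : |a| ^ k ≤ (n * K) ^ k := pow_le_pow_left₀ (abs_nonneg a) ha k
      have h2 : |b| ^ m ≤ K ^ m := pow_le_pow_left₀ (abs_nonneg b) hb m
      exact mul_le_mul h1 h2 (by positivity) (by positivity)
    have hSk : ∀ k : ℕ, Integrable (fun ω => S ω ^ k) ℙ := fun k =>
      aux_integrable_of_bounded (hSmeas.pow_const k) ((n * K) ^ k)
        (fun ω => by rw [abs_pow]; exact pow_le_pow_left₀ (abs_nonneg _) (hSbdd ω) k)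
    have hprod : ∀ k m : ℕ, Integrable (fun ω => S ω ^ k * Y n ω ^ m) ℙ := fun k m =>
      aux_integrable_of_bounded ((hSmeas.pow_const k).mul ((hmeas n).pow_const m)) _
        (fun ω => habs_pm _ _ k m (hSbdd ω) (hbdd n ω))
    have hYk : ∀ m : ℕ, Integrable (fun ω => Y n ω ^ m) ℙ := fun m =>
      aux_integrable_of_bounded ((hmeas n).pow_const m) (K ^ m)
        (fun ω => by rw [abs_pow]; exact pow_le_pow_left₀ (abs_nonneg _) (hbdd n ω) m)
    -- independence of powers
    have hIndPow : ∀ k m : ℕ, IndepFun (fun ω => S ω ^ k) (fun ω => Y n ω ^ m) ℙ :=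
      fun k m => hSY.comp (measurable_id.pow_const k) (measurable_id.pow_const m)
    have hmulint : ∀ k m : ℕ, ∫ ω, S ω ^ k * Y n ω ^ m
        = (∫ ω, S ω ^ k) * ∫ ω, Y n ω ^ m := fun k m =>
      (hIndPow k m).integral_fun_mul_eq_mul_integral (hSk k).aestronglyMeasurable (hYk m).aestronglyMeasurable
    have hSzero : ∫ ω, S ω = 0 := by
      simp only [hSdef]
      rw [integral_finset_sum _ (fun i _ => (hL2 i).integrable one_le_two)]
      exact Finset.sum_eq_zero (fun i _ => hzero i)
    -- expand
    have hexp : ∫ ω, (∑ i ∈ Finset.range (n+1), Y i ω) ^ 4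
        = ∫ ω, (S ω ^ 4 + (4 * (S ω ^ 3 * Y n ω ^ 1) + (6 * (S ω ^ 2 * Y n ω ^ 2)
            + (4 * (S ω ^ 1 * Y n ω ^ 3) + Y n ω ^ 4)))) := by
      congr 1
      funext ω
      rw [Finset.sum_range_succ]
      simp only [hSdef]
      ring
    have i1 : Integrable (fun ω => 4 * (S ω ^ 1 * Y n ω ^ 3) + Y n ω ^ 4) ℙ :=
      ((hprod 1 3).const_mul 4).add (hYk 4)
    have i2 : Integrable (fun ω => 6 * (S ω ^ 2 * Y n ω ^ 2)
        + (4 * (S ω ^ 1 * Y n ω ^ 3) + Y n ω ^ 4)) ℙ := ((hprod 2 2).const_mul 6).add i1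
    have i3 : Integrable (fun ω => 4 * (S ω ^ 3 * Y n ω ^ 1) + (6 * (S ω ^ 2 * Y n ω ^ 2)
        + (4 * (S ω ^ 1 * Y n ω ^ 3) + Y n ω ^ 4))) ℙ := ((hprod 3 1).const_mul 4).add i2
    have e1 : ∫ ω, (S ω ^ 4 + (4 * (S ω ^ 3 * Y n ω ^ 1) + (6 * (S ω ^ 2 * Y n ω ^ 2)
            + (4 * (S ω ^ 1 * Y n ω ^ 3) + Y n ω ^ 4))))
        = (∫ ω, S ω ^ 4) + ∫ ω, (4 * (S ω ^ 3 * Y n ω ^ 1) + (6 * (S ω ^ 2 * Y n ω ^ 2)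
            + (4 * (S ω ^ 1 * Y n ω ^ 3) + Y n ω ^ 4))) := integral_add (hSk 4) i3
    have e2 : ∫ ω, (4 * (S ω ^ 3 * Y n ω ^ 1) + (6 * (S ω ^ 2 * Y n ω ^ 2)
            + (4 * (S ω ^ 1 * Y n ω ^ 3) + Y n ω ^ 4)))
        = (∫ ω, 4 * (S ω ^ 3 * Y n ω ^ 1)) + ∫ ω, (6 * (S ω ^ 2 * Y n ω ^ 2)
            + (4 * (S ω ^ 1 * Y n ω ^ 3) + Y n ω ^ 4)) :=
      integral_add ((hprod 3 1).const_mul 4) i2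
    have e3 : ∫ ω, (6 * (S ω ^ 2 * Y n ω ^ 2) + (4 * (S ω ^ 1 * Y n ω ^ 3) + Y n ω ^ 4))
        = (∫ ω, 6 * (S ω ^ 2 * Y n ω ^ 2)) + ∫ ω, (4 * (S ω ^ 1 * Y n ω ^ 3) + Y n ω ^ 4) :=
      integral_add ((hprod 2 2).const_mul 6) i1
    have e4 : ∫ ω, (4 * (S ω ^ 1 * Y n ω ^ 3) + Y n ω ^ 4)
        = (∫ ω, 4 * (S ω ^ 1 * Y n ω ^ 3)) + ∫ ω, Y n ω ^ 4 :=
      integral_add ((hprod 1 3).const_mul 4) (hYk 4)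
    have z31 : ∫ ω, S ω ^ 3 * Y n ω ^ 1 = 0 := by
      rw [hmulint 3 1]
      simp [hzero n]
    have z13 : ∫ ω, S ω ^ 1 * Y n ω ^ 3 = 0 := by
      rw [hmulint 1 3]
      simp [hSzero]
    have hS2 : ∫ ω, S ω ^ 2 ≤ n * K ^ 2 := hsumsq
    have hS2nn : 0 ≤ ∫ ω, S ω ^ 2 := integral_nonneg (fun ω => by positivity)
    have hY2nn : 0 ≤ ∫ ω, Y n ω ^ 2 := integral_nonneg (fun ω => by positivity)
    have hY4 : ∫ ω, Y n ω ^ 4 ≤ K ^ 4 := by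
      calc ∫ ω, Y n ω ^ 4 ≤ ∫ _ω, K ^ 4 := by
            apply integral_mono (hYk 4) (integrable_const _)
            intro ω
            dsimp only
            have h4 : |Y n ω ^ 4| ≤ K ^ 4 := by
              rw [abs_pow]; exact pow_le_pow_left₀ (abs_nonneg _) (hbdd n ω) 4
            exact le_trans (le_abs_self _) h4
        _ = K ^ 4 := by simp
    rw [hexp, e1, e2, e3, e4, integral_const_mul, integral_const_mul, integral_const_mul,
      z31, z13, hmulint 2 2]
    have hcast : ((n : ℝ) + 1) ^ 2 = n ^ 2 + 2 * n + 1 := by ring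
    push_cast
    nlinarith [hYsq n, mul_le_mul hS2 (hYsq n) hY2nn (by positivity : (0:ℝ) ≤ (n : ℝ) * K ^ 2),
      sq_nonneg K, (Nat.cast_nonneg n : (0:ℝ) ≤ (n:ℝ))]

section Trunc

noncomputable def truncIn (M x : ℝ) : ℝ := if |x| ≤ M then x else 0
noncomputable def truncOut (M x : ℝ) : ℝ := if |x| ≤ M then 0 else x

lemma measurable_truncIn (M : ℝ) : Measurable (truncIn M) :=
  Measurable.ite (measurableSet_le (continuous_abs.measurable) measurable_const)
    measurable_id measurable_const

lemma measurable_truncOut (M : ℝ) : Measurable (truncOut M) :=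
  Measurable.ite (measurableSet_le (continuous_abs.measurable) measurable_const)
    measurable_const measurable_id

lemma truncIn_add_truncOut (M x : ℝ) : truncIn M x + truncOut M x = x := by
  unfold truncIn truncOut; split_ifs <;> ring

lemma abs_truncIn_le {M : ℝ} (hM : 0 ≤ M) (x : ℝ) : |truncIn M x| ≤ M := by
  unfold truncIn; split_ifs with h
  · exact h
  · simpa using hM

lemma abs_truncOut_le (M x : ℝ) : |truncOut M x| ≤ |x| := by
  unfold truncOut; split_ifs with h
  · simp [abs_nonneg]
  · exact le_refl _

lemma truncOut_eq_zero {M x : ℝ} (h : |x| ≤ M) : truncOut M x = 0 := by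
  unfold truncOut; split_ifs; rfl

end Trunc

/-- For i.i.d. real random variables with finite second moment and positive mean,
the expectation of the negative part of the partial sums tends to `0`. -/
theorem expectation_neg_part_tendsto_zero
    {Ω : Type*} [MeasureSpace Ω] [IsProbabilityMeasure (ℙ : Measure Ω)]
    (ξ : ℕ → Ω → ℝ)
    (hmeas : ∀ i, Measurable (ξ i))
    (hindep : iIndepFun ξ ℙ)
    (hident : ∀ i, IdentDistrib (ξ i) (ξ 0) ℙ ℙ)
    (hL2 : MemLp (ξ 0) 2 ℙ)
    (hmean : 0 < ∫ ω, ξ 0 ω) :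
    Tendsto (fun n => ∫ ω, max (-(∑ i ∈ Finset.range n, ξ i ω)) 0) atTop (nhds 0) := by
  set μ₀ : ℝ := ∫ ω, ξ 0 ω with hμ₀
  have hξL2 : ∀ i, MemLp (ξ i) 2 ℙ := fun i => (hident i).symm.memLp_snd hL2
  have hξint : ∀ i, Integrable (ξ i) ℙ := fun i => (hξL2 i).integrable one_le_two
  have hfnonneg : ∀ n, 0 ≤ ∫ ω, max (-(∑ i ∈ Finset.range n, ξ i ω)) 0 :=
    fun n => integral_nonneg (fun ω => le_max_right _ _)
  rw [Metric.tendsto_atTop]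
  intro ε hε
  set δ : ℝ := ε * μ₀ / 4 with hδdef
  have hδpos : 0 < δ := by positivity
  -- choose the truncation level M
  have htendF : Tendsto (fun m : ℕ => ∫ ω, (truncOut m (ξ 0 ω)) ^ 2) atTop (nhds 0) := by
    have h0 : (0 : ℝ) = ∫ _ω : Ω, (0 : ℝ) := by simp
    rw [h0]
    apply tendsto_integral_of_dominated_convergence (bound := fun ω => (ξ 0 ω) ^ 2)
    · intro m
      exact (((measurable_truncOut (m : ℝ)).comp (hmeas 0)).pow_const 2).aestronglyMeasurable
    · exact hL2.integrable_sq
    · intro m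
      apply Filter.Eventually.of_forall
      intro ω
      rw [Real.norm_eq_abs, abs_pow]
      have h1 : |truncOut (m : ℝ) (ξ 0 ω)| ≤ |ξ 0 ω| := abs_truncOut_le _ _
      calc |truncOut (m : ℝ) (ξ 0 ω)| ^ 2 ≤ |ξ 0 ω| ^ 2 :=
            pow_le_pow_left₀ (abs_nonneg _) h1 2
        _ = (ξ 0 ω) ^ 2 := sq_abs _
    · apply Filter.Eventually.of_forall
      intro ω
      apply Tendsto.congr' _ tendsto_const_nhds
      rw [Filter.EventuallyEq, eventually_atTop]
      refine ⟨⌈|ξ 0 ω|⌉₊, fun m hm => ?_⟩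
      have : |ξ 0 ω| ≤ (m : ℝ) := le_trans (Nat.le_ceil _) (by exact_mod_cast hm)
      rw [truncOut_eq_zero this]
      simp
  obtain ⟨M, hM⟩ : ∃ m : ℕ, ∫ ω, (truncOut m (ξ 0 ω)) ^ 2 < δ :=
    (htendF.eventually_lt_const hδpos).exists
  -- truncated pieces
  set a : ℝ := ∫ ω, truncIn M (ξ 0 ω) with hadef
  set b : ℝ := ∫ ω, truncOut M (ξ 0 ω) with hbdef
  set K : ℝ := M + |a| with hKdef
  have hKnn : (0 : ℝ) ≤ K := by positivity
  set Yt : ℕ → Ω → ℝ := fun i => (fun x => truncIn M x - a) ∘ ξ i with hYtdef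
  set Zt : ℕ → Ω → ℝ := fun i => (fun x => truncOut M x - b) ∘ ξ i with hZtdef
  have hgmeas : Measurable (fun x => truncIn M x - a) :=
    (measurable_truncIn _).sub measurable_const
  have hhmeas : Measurable (fun x => truncOut M x - b) :=
    (measurable_truncOut _).sub measurable_const
  have hYtmeas : ∀ i, Measurable (Yt i) := fun i => hgmeas.comp (hmeas i)
  have hZtmeas : ∀ i, Measurable (Zt i) := fun i => hhmeas.comp (hmeas i)
  have hYtindep : iIndepFun Yt ℙ :=
    hindep.comp (fun _ x => truncIn M x - a) (fun _ => hgmeas)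
  have hZtindep : iIndepFun Zt ℙ :=
    hindep.comp (fun _ x => truncOut M x - b) (fun _ => hhmeas)
  have hYtbdd : ∀ i ω, |Yt i ω| ≤ K := by
    intro i ω
    calc |Yt i ω| = |truncIn M (ξ i ω) - a| := rfl
      _ ≤ |truncIn M (ξ i ω)| + |a| := abs_sub _ _
      _ ≤ M + |a| := by
          have := abs_truncIn_le (by positivity : (0:ℝ) ≤ (M:ℝ)) (ξ i ω)
          linarith
  -- integrability of truncated pieces
  have hηint : ∀ i, Integrable (fun ω => truncIn M (ξ i ω)) ℙ := fun i =>
    aux_integrable_of_bounded ((measurable_truncIn _).comp (hmeas i)) M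
      (fun ω => abs_truncIn_le (by positivity) _)
  have hζL2 : ∀ i, MemLp (fun ω => truncOut M (ξ i ω)) 2 ℙ := fun i =>
    MemLp.of_le (hξL2 i) ((measurable_truncOut _).comp (hmeas i)).aestronglyMeasurable
      (Filter.Eventually.of_forall fun ω => by
        simpa [Real.norm_eq_abs] using abs_truncOut_le (M : ℝ) (ξ i ω))
  have hζint : ∀ i, Integrable (fun ω => truncOut M (ξ i ω)) ℙ := fun i =>
    (hζL2 i).integrable one_le_two
  -- identical distribution transfers
  have hηa : ∀ i, ∫ ω, truncIn M (ξ i ω) = a := fun i =>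
    ((hident i).comp (measurable_truncIn (M:ℝ))).integral_eq
  have hζb : ∀ i, ∫ ω, truncOut M (ξ i ω) = b := fun i =>
    ((hident i).comp (measurable_truncOut (M:ℝ))).integral_eq
  have hYtzero : ∀ i, ∫ ω, Yt i ω = 0 := by
    intro i
    have : ∫ ω, Yt i ω = (∫ ω, truncIn M (ξ i ω)) - ∫ _ω : Ω, a :=
      integral_sub (hηint i) (integrable_const a)
    rw [this, hηa i]
    simp
  have hZtzero : ∀ i, ∫ ω, Zt i ω = 0 := by
    intro i
    have : ∫ ω, Zt i ω = (∫ ω, truncOut M (ξ i ω)) - ∫ _ω : Ω, b :=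
      integral_sub (hζint i) (integrable_const b)
    rw [this, hζb i]
    simp
  have hZtL2 : ∀ i, MemLp (Zt i) 2 ℙ := fun i => (hζL2 i).sub (memLp_const b)
  -- second moment of Zt
  have hZtsq : ∀ i, ∫ ω, (Zt i ω) ^ 2 ≤ δ := by
    intro i
    have hid2 : IdentDistrib (fun ω => (Zt i ω) ^ 2) (fun ω => (Zt 0 ω) ^ 2) ℙ ℙ :=
      (hident i).comp (((measurable_truncOut (M:ℝ)).sub measurable_const).pow_const 2)
    rw [hid2.integral_eq]
    have hexp : ∫ ω, (Zt 0 ω) ^ 2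
        = ∫ ω, ((truncOut M (ξ 0 ω)) ^ 2 - 2 * b * truncOut M (ξ 0 ω) + b ^ 2) := by
      congr 1; funext ω
      show (truncOut M (ξ 0 ω) - b) ^ 2 = _
      ring
    have i1 : Integrable (fun ω => (truncOut M (ξ 0 ω)) ^ 2) ℙ := (hζL2 0).integrable_sq
    have i2 : Integrable (fun ω => 2 * b * truncOut M (ξ 0 ω)) ℙ :=
      (hζint 0).const_mul (2 * b)
    have e1 : ∫ ω, ((truncOut M (ξ 0 ω)) ^ 2 - 2 * b * truncOut M (ξ 0 ω) + b ^ 2)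
        = (∫ ω, ((truncOut M (ξ 0 ω)) ^ 2 - 2 * b * truncOut M (ξ 0 ω))) + ∫ _ω : Ω, b ^ 2 :=
      integral_add (i1.sub i2) (integrable_const _)
    have e2 : ∫ ω, ((truncOut M (ξ 0 ω)) ^ 2 - 2 * b * truncOut M (ξ 0 ω))
        = (∫ ω, (truncOut M (ξ 0 ω)) ^ 2) - ∫ ω, 2 * b * truncOut M (ξ 0 ω) :=
      integral_sub i1 i2
    have e3 : ∫ ω, 2 * b * truncOut M (ξ 0 ω) = 2 * b * b := by
      rw [integral_const_mul, hζb 0]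
    rw [hexp, e1, e2, e3]
    simp only [integral_const, probReal_univ, smul_eq_mul, one_mul]
    nlinarith [hM, sq_nonneg b]
  -- the mean decomposition
  have hab : a + b = μ₀ := by
    rw [hadef, hbdef, hμ₀, ← integral_add (hηint 0) (hζint 0)]
    congr 1; funext ω
    exact truncIn_add_truncOut _ _
  -- moment bounds for the sums
  have hA : ∀ n : ℕ, ∫ ω, (∑ i ∈ Finset.range n, Yt i ω) ^ 4 ≤ 3 * n ^ 2 * K ^ 4 :=
    fun n => aux_sum_pow4_le Yt hYtmeas hYtindep K hKnn hYtbdd hYtzero n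
  have hB : ∀ n : ℕ, ∫ ω, (∑ i ∈ Finset.range n, Zt i ω) ^ 2 ≤ n * δ :=
    fun n => aux_sum_sq_le Zt hZtmeas hZtindep hZtL2 hZtzero δ (fun i => hZtsq i) n
  -- main estimate for n ≥ 1
  have hbound : ∀ n : ℕ, 1 ≤ n →
      ∫ ω, max (-(∑ i ∈ Finset.range n, ξ i ω)) 0 ≤ 24 * K ^ 4 / (μ₀ ^ 3 * n) + ε / 2 := by
    intro n hn
    have hnpos : (0 : ℝ) < n := by exact_mod_cast hn
    set c : ℝ := n * μ₀ / 2 with hcdef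
    have hc : 0 < c := by positivity
    set WA : Ω → ℝ := fun ω => ∑ i ∈ Finset.range n, Yt i ω with hWA
    set WB : Ω → ℝ := fun ω => ∑ i ∈ Finset.range n, Zt i ω with hWB
    have hdecomp : ∀ ω, ∑ i ∈ Finset.range n, ξ i ω = WA ω + WB ω + 2 * c := by
      intro ω
      have : ∀ i, ξ i ω = Yt i ω + Zt i ω + (a + b) := by
        intro i
        show ξ i ω = (truncIn M (ξ i ω) - a) + (truncOut M (ξ i ω) - b) + (a + b)
        have h := truncIn_add_truncOut (M : ℝ) (ξ i ω)
        linarith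
      simp only [this, Finset.sum_add_distrib, Finset.sum_const, Finset.card_range,
        nsmul_eq_mul]
      have habn : (n : ℝ) * a + (n : ℝ) * b = (n : ℝ) * μ₀ := by rw [← hab]; ring
      simp only [hWA, hWB, hcdef]
      rw [habn]
      ring
    have hWAmeas : Measurable WA := Finset.measurable_sum _ (fun i _ => hYtmeas i)
    have hWAbdd : ∀ ω, |WA ω| ≤ n * K := by
      intro ω
      calc |WA ω| ≤ ∑ i ∈ Finset.range n, |Yt i ω| := Finset.abs_sum_le_sum_abs _ _
        _ ≤ ∑ _i ∈ Finset.range n, K := Finset.sum_le_sum (fun i _ => hYtbdd i ω)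
        _ = n * K := by simp [mul_comm]
    have hWA4int : Integrable (fun ω => WA ω ^ 4) ℙ :=
      aux_integrable_of_bounded (hWAmeas.pow_const 4) ((n * K) ^ 4)
        (fun ω => by rw [abs_pow]; exact pow_le_pow_left₀ (abs_nonneg _) (hWAbdd ω) 4)
    have hWBL2 : MemLp WB 2 ℙ := by
      have : WB = ∑ i ∈ Finset.range n, Zt i := by funext ω; simp [hWB]
      rw [this]
      exact memLp_finset_sum' _ (fun i _ => hZtL2 i)
    have hWB2int : Integrable (fun ω => WB ω ^ 2) ℙ := hWBL2.integrable_sq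
    have hptwise : ∀ ω, max (-(∑ i ∈ Finset.range n, ξ i ω)) 0
        ≤ WA ω ^ 4 / c ^ 3 + WB ω ^ 2 / c := by
      intro ω
      rw [hdecomp ω]
      exact aux_key_ineq (WA ω) (WB ω) c hc
    have hint : Integrable (fun ω => WA ω ^ 4 / c ^ 3 + WB ω ^ 2 / c) ℙ :=
      (hWA4int.div_const _).add (hWB2int.div_const _)
    have h1 : ∫ ω, max (-(∑ i ∈ Finset.range n, ξ i ω)) 0
        ≤ ∫ ω, (WA ω ^ 4 / c ^ 3 + WB ω ^ 2 / c) :=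
      integral_mono_of_nonneg (Filter.Eventually.of_forall fun ω => le_max_right _ _)
        hint (Filter.Eventually.of_forall hptwise)
    have h2 : ∫ ω, (WA ω ^ 4 / c ^ 3 + WB ω ^ 2 / c)
        = (∫ ω, WA ω ^ 4) / c ^ 3 + (∫ ω, WB ω ^ 2) / c := by
      rw [integral_add (hWA4int.div_const _) (hWB2int.div_const _),
        integral_div, integral_div]
    calc ∫ ω, max (-(∑ i ∈ Finset.range n, ξ i ω)) 0
        ≤ (∫ ω, WA ω ^ 4) / c ^ 3 + (∫ ω, WB ω ^ 2) / c := by rw [← h2]; exact h1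
      _ ≤ (3 * n ^ 2 * K ^ 4) / c ^ 3 + ((n : ℝ) * δ) / c := by
          gcongr
          · exact hA n
          · exact hB n
      _ = 24 * K ^ 4 / (μ₀ ^ 3 * n) + ε / 2 := by
          rw [hcdef, hδdef]
          field_simp
          ring
  -- conclusion
  obtain ⟨N₀, hN₀⟩ := exists_nat_gt (48 * K ^ 4 / (μ₀ ^ 3 * ε))
  refine ⟨max N₀ 1, fun n hn => ?_⟩
  have hn1 : 1 ≤ n := le_trans (le_max_right _ _) hn
  have hnN : N₀ ≤ n := le_trans (le_max_left _ _) hn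
  have hnpos : (0 : ℝ) < n := by exact_mod_cast hn1
  rw [Real.dist_eq, sub_zero, abs_of_nonneg (hfnonneg n)]
  apply lt_of_le_of_lt (hbound n hn1)
  have hnR : 48 * K ^ 4 / (μ₀ ^ 3 * ε) < (n : ℝ) :=
    lt_of_lt_of_le hN₀ (by exact_mod_cast hnN)
  have h48 : 48 * K ^ 4 < (n : ℝ) * (μ₀ ^ 3 * ε) := by
    rw [div_lt_iff₀ (by positivity)] at hnR
    linarith
  have hsmall : 24 * K ^ 4 / (μ₀ ^ 3 * n) < ε / 2 := by
    rw [div_lt_iff₀ (by positivity)]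
    exact aux_arith h48
  linarith
end

section
/- Let Z, Z1, Z2, ... be i.i.d. random vectors in ℝ² with E‖Z‖ < ∞ and mean μ = E Z, and let L_n denote the perimeter of the convex hull of {0, S_1, ..., S_n}, where S_k = Z1 + ... + Z_k. Then L_n/n → 2‖μ‖ almost surely. -/
open MeasureTheory ProbabilityTheory Filter
open scoped RealInnerProductSpace

/-- The unit vector in direction `θ`. -/
noncomputable def unitVec (θ : ℝ) : EuclideanSpace ℝ (Fin 2) :=
  (WithLp.equiv 2 (Fin 2 → ℝ)).symm ![Real.cos θ, Real.sin θ]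

/-- The perimeter of the convex hull of the points `x 0, ..., x n`
(with `x 0 = 0`), via Cauchy's formula. -/
noncomputable def perimCauchy (n : ℕ) (x : ℕ → EuclideanSpace ℝ (Fin 2)) : ℝ :=
  ∫ θ in (0 : ℝ)..(2 * Real.pi),
    (Finset.range (n + 1)).sup' Finset.nonempty_range_add_one (fun k => ⟪x k, unitVec θ⟫)

open Real

lemma norm_unitVec (θ : ℝ) : ‖unitVec θ‖ = 1 := by
  rw [EuclideanSpace.norm_eq]
  simp [unitVec, Fin.sum_univ_two]

lemma per (r : ℝ) : Function.Periodic (fun u => max (r * Real.cos u) 0) (2 * π) := by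
  intro u; simp [Real.cos_add_two_pi]

lemma contmax (r : ℝ) : Continuous (fun u => max (r * Real.cos u) 0) :=
  (continuous_const.mul Real.continuous_cos).max continuous_const

lemma integral_max_cos (r : ℝ) (hr : 0 ≤ r) (φ : ℝ) :
    ∫ θ in (0:ℝ)..(2*π), max (r * Real.cos (θ - φ)) 0 = 2 * r := by
  have h1 : ∫ θ in (0:ℝ)..(2*π), max (r * Real.cos (θ - φ)) 0
      = ∫ u in (0-φ)..(2*π-φ), max (r * Real.cos u) 0 :=
    intervalIntegral.integral_comp_sub_right (fun u => max (r * Real.cos u) 0) φ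
  have h2 : ∫ u in (0-φ)..(2*π-φ), max (r * Real.cos u) 0
      = ∫ u in (-(π/2))..(-(π/2)+2*π), max (r * Real.cos u) 0 := by
    have := (per r).intervalIntegral_add_eq (0-φ) (-(π/2))
    rw [← this]; congr 1; ring
  have h3 : (-(π/2)+2*π : ℝ) = 3*π/2 := by ring
  have hint : ∀ a b : ℝ, IntervalIntegrable (fun u => max (r * Real.cos u) 0) volume a b :=
    fun a b => (contmax r).intervalIntegrable a b
  have h4 : ∫ u in (-(π/2))..(3*π/2), max (r * Real.cos u) 0
      = (∫ u in (-(π/2))..(π/2), max (r * Real.cos u) 0)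
        + ∫ u in (π/2)..(3*π/2), max (r * Real.cos u) 0 :=
    (intervalIntegral.integral_add_adjacent_intervals (hint _ _) (hint _ _)).symm
  have h5 : ∫ u in (-(π/2))..(π/2), max (r * Real.cos u) 0 = 2 * r := by
    have : ∫ u in (-(π/2))..(π/2), max (r * Real.cos u) 0
        = ∫ u in (-(π/2))..(π/2), r * Real.cos u := by
      apply intervalIntegral.integral_congr
      intro u hu
      rw [Set.uIcc_of_le (by linarith [Real.pi_pos])] at hu
      exact max_eq_left (mul_nonneg hr (Real.cos_nonneg_of_mem_Icc hu))
    rw [this, intervalIntegral.integral_const_mul, integral_cos]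
    simp [Real.sin_pi_div_two]
    ring
  have h6 : ∫ u in (π/2)..(3*π/2), max (r * Real.cos u) 0 = 0 := by
    have : ∫ u in (π/2)..(3*π/2), max (r * Real.cos u) 0
        = ∫ u in (π/2)..(3*π/2), (0:ℝ) := by
      apply intervalIntegral.integral_congr
      intro u hu
      rw [Set.uIcc_of_le (by linarith [Real.pi_pos])] at hu
      have hc : Real.cos u ≤ 0 :=
        Real.cos_nonpos_of_pi_div_two_le_of_le hu.1 (by linarith [hu.2])
      exact max_eq_right (mul_nonpos_of_nonneg_of_nonpos hr hc)
    simp [this]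
  rw [h1, h2, h3, h4, h5, h6]; ring

lemma inner_unitVec (v : EuclideanSpace ℝ (Fin 2)) (θ : ℝ) :
    ⟪v, unitVec θ⟫ = v 0 * Real.cos θ + v 1 * Real.sin θ := by
  simp [unitVec, PiLp.inner_apply, Fin.sum_univ_two, RCLike.inner_apply, mul_comm]

lemma integral_max_inner (v : EuclideanSpace ℝ (Fin 2)) :
    ∫ θ in (0:ℝ)..(2*π), max ⟪v, unitVec θ⟫ 0 = 2 * ‖v‖ := by
  set z : ℂ := ⟨v 0, v 1⟩ with hz
  have hnorm : ‖v‖ = ‖z‖ := by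
    rw [EuclideanSpace.norm_eq, Complex.norm_def, Complex.normSq_mk]
    simp [Fin.sum_univ_two, sq]
  set r := ‖z‖
  set φ := Complex.arg z
  have hre : r * Real.cos φ = v 0 := Complex.norm_mul_cos_arg z
  have him : r * Real.sin φ = v 1 := Complex.norm_mul_sin_arg z
  have key : ∀ θ : ℝ, ⟪v, unitVec θ⟫ = r * Real.cos (θ - φ) := by
    intro θ
    rw [inner_unitVec, ← hre, ← him, Real.cos_sub]
    ring
  simp_rw [key]
  rw [integral_max_cos r (norm_nonneg z) φ, hnorm]

lemma abs_sup'_sub_sup'_le {ι : Type*} (s : Finset ι) (H : s.Nonempty) (f g : ι → ℝ) :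
    |s.sup' H f - s.sup' H g| ≤ s.sup' H (fun i => |f i - g i|) := by
  rw [abs_sub_le_iff]
  constructor
  · rw [sub_le_iff_le_add]
    apply Finset.sup'_le
    intro i hi
    calc f i ≤ |f i - g i| + g i := by
          have := le_abs_self (f i - g i); linarith
      _ ≤ s.sup' H (fun i => |f i - g i|) + s.sup' H g :=
          add_le_add (Finset.le_sup' (fun i => |f i - g i|) hi) (Finset.le_sup' g hi)
  · rw [sub_le_iff_le_add]
    apply Finset.sup'_le
    intro i hi
    calc g i ≤ |f i - g i| + f i := by
          have := neg_abs_le (f i - g i); linarith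
      _ ≤ s.sup' H (fun i => |f i - g i|) + s.sup' H f :=
          add_le_add (Finset.le_sup' (fun i => |f i - g i|) hi) (Finset.le_sup' f hi)

lemma sup'_range_mul (n : ℕ) (c : ℝ) :
    (Finset.range (n+1)).sup' Finset.nonempty_range_add_one (fun k => (k:ℝ) * c)
      = n * max c 0 := by
  rcases le_or_gt c 0 with hc | hc
  · rw [max_eq_right hc, mul_zero]
    apply le_antisymm
    · exact Finset.sup'_le _ _ fun k _ =>
        mul_nonpos_of_nonneg_of_nonpos (Nat.cast_nonneg k) hc
    · have h0 := Finset.le_sup' (fun k : ℕ => (k:ℝ) * c) (Finset.mem_range.mpr (Nat.succ_pos n))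
      exact le_trans (by simp) h0
  · rw [max_eq_left hc.le]
    apply le_antisymm
    · apply Finset.sup'_le
      intro k hk
      have : (k:ℝ) ≤ n := by
        exact_mod_cast Nat.lt_succ_iff.mp (Finset.mem_range.mp hk)
      exact mul_le_mul_of_nonneg_right this hc.le
    · exact Finset.le_sup' (fun k : ℕ => (k:ℝ) * c) (Finset.self_mem_range_succ n)

lemma max_div_tendsto (d : ℕ → ℝ) (hd : ∀ k, 0 ≤ d k)
    (h : Tendsto (fun k => d k / k) atTop (nhds 0)) :
    Tendsto (fun n => (Finset.range (n+1)).sup' Finset.nonempty_range_add_one d / n)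
      atTop (nhds 0) := by
  rw [Metric.tendsto_atTop] at h ⊢
  intro ε hε
  obtain ⟨K, hK⟩ := h (ε/2) (by linarith)
  set M := (Finset.range (K+1)).sup' Finset.nonempty_range_add_one d with hM
  have hM0 : 0 ≤ M := le_trans (hd 0) (Finset.le_sup' d (by simp : 0 ∈ Finset.range (K+1)))
  obtain ⟨N₁, hN₁⟩ := exists_nat_gt (2*M/ε)
  refine ⟨max (K+1) (N₁+1), fun n hn => ?_⟩
  have hnK : K + 1 ≤ n := le_trans (le_max_left _ _) hn
  have hnN : N₁ + 1 ≤ n := le_trans (le_max_right _ _) hn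
  have hn0' : 0 < n := by omega
  have hn0 : (0:ℝ) < n := by exact_mod_cast hn0'
  have hsup : (Finset.range (n+1)).sup' Finset.nonempty_range_add_one d ≤ max M (ε/2 * n) := by
    apply Finset.sup'_le
    intro k hk
    rcases le_or_gt k K with hkK | hkK
    · exact le_max_of_le_left (Finset.le_sup' d (Finset.mem_range.mpr (Nat.lt_succ_of_le hkK)))
    · have hk1 : (0:ℝ) < k := by exact_mod_cast hkK.trans_le' (Nat.zero_le K)
      have := hK k (by omega)
      rw [Real.dist_eq, sub_zero, abs_of_nonneg (div_nonneg (hd k) hk1.le)] at this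
      have hdk : d k < ε/2 * k := by
        rw [div_lt_iff₀ hk1] at this; linarith
      have hkn : (k:ℝ) ≤ n := by
        exact_mod_cast Nat.lt_succ_iff.mp (Finset.mem_range.mp hk)
      exact le_max_of_le_right (hdk.le.trans (by nlinarith))
  have hsup0 : 0 ≤ (Finset.range (n+1)).sup' Finset.nonempty_range_add_one d :=
    le_trans (hd 0) (Finset.le_sup' d (by simp : 0 ∈ Finset.range (n+1)))
  rw [Real.dist_eq, sub_zero, abs_of_nonneg (div_nonneg hsup0 hn0.le)]
  have h1 : (Finset.range (n+1)).sup' Finset.nonempty_range_add_one d / n ≤ max M (ε/2 * n) / n := by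
    gcongr
  refine lt_of_le_of_lt h1 ?_
  rw [div_lt_iff₀ hn0]
  apply max_lt
  · have hN : (2*M/ε) < N₁ := hN₁
    have : (N₁:ℝ) ≤ n := by exact_mod_cast Nat.le_of_succ_le hnN
    rw [div_lt_iff₀ hε] at hN
    nlinarith
  · nlinarith

lemma perim_det (x : ℕ → EuclideanSpace ℝ (Fin 2)) (hx0 : x 0 = 0)
    (μ : EuclideanSpace ℝ (Fin 2))
    (hlim : Tendsto (fun n : ℕ => (n:ℝ)⁻¹ • x n) atTop (nhds μ)) :
    Tendsto (fun n => perimCauchy n x / n) atTop (nhds (2 * ‖μ‖)) := by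
  set d : ℕ → ℝ := fun k => ‖x k - (k:ℝ) • μ‖ with hd
  have hd0 : ∀ k, 0 ≤ d k := fun k => norm_nonneg _
  -- d k / k → 0
  have hdk : Tendsto (fun k => d k / k) atTop (nhds 0) := by
    have h1 : Tendsto (fun n : ℕ => ‖(n:ℝ)⁻¹ • x n - μ‖) atTop (nhds 0) :=
      (tendsto_iff_norm_sub_tendsto_zero.mp hlim)
    apply h1.congr'
    filter_upwards [eventually_ge_atTop 1] with k hk
    have hk0 : ((k:ℝ)) ≠ 0 := by positivity
    have heq : (k:ℝ)⁻¹ • x k - μ = (k:ℝ)⁻¹ • (x k - (k:ℝ) • μ) := by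
      rw [smul_sub, smul_smul, inv_mul_cancel₀ hk0, one_smul]
    rw [heq, norm_smul, norm_inv, Real.norm_natCast, div_eq_inv_mul]
  have hD := max_div_tendsto d hd0 hdk
  -- continuity facts
  have hcont : ∀ v : EuclideanSpace ℝ (Fin 2), Continuous fun θ => ⟪v, unitVec θ⟫ := by
    intro v
    simp_rw [inner_unitVec]
    exact (continuous_const.mul Real.continuous_cos).add
      (continuous_const.mul Real.continuous_sin)
  have hGcont : ∀ n : ℕ, Continuous fun θ =>
      (Finset.range (n+1)).sup' Finset.nonempty_range_add_one (fun k => ⟪x k, unitVec θ⟫) := by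
    intro n
    exact Continuous.finset_sup'_apply Finset.nonempty_range_add_one (fun k _ => hcont (x k))
  have hhcont : Continuous fun θ => max ⟪μ, unitVec θ⟫ (0:ℝ) := (hcont μ).max continuous_const
  -- squeeze
  have key : Tendsto (fun n => perimCauchy n x / n - 2 * ‖μ‖) atTop (nhds 0) := by
    apply squeeze_zero_norm' (a := fun n =>
      ((Finset.range (n+1)).sup' Finset.nonempty_range_add_one d / n) * (2 * π))
    · filter_upwards [eventually_ge_atTop 1] with n hn
      have hn0 : ((n:ℝ)) ≠ 0 := by positivity
      set G : ℝ → ℝ := fun θ =>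
        (Finset.range (n+1)).sup' Finset.nonempty_range_add_one (fun k => ⟪x k, unitVec θ⟫)
      have h1 : perimCauchy n x / n = ∫ θ in (0:ℝ)..(2*π), G θ / n := by
        rw [intervalIntegral.integral_div]
        rfl
      have h2 : perimCauchy n x / n - 2 * ‖μ‖
          = ∫ θ in (0:ℝ)..(2*π), (G θ / n - max ⟪μ, unitVec θ⟫ 0) := by
        rw [intervalIntegral.integral_sub
          (((hGcont n).div_const _).intervalIntegrable _ _)
          (hhcont.intervalIntegrable _ _), ← h1, integral_max_inner μ]
      rw [h2]
      apply le_trans (intervalIntegral.norm_integral_le_of_norm_le_const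
        (C := (Finset.range (n+1)).sup' Finset.nonempty_range_add_one d / n) ?_)
      · rw [sub_zero, abs_of_nonneg Real.two_pi_pos.le]
      · intro θ _
        have hmax : max ⟪μ, unitVec θ⟫ 0
            = ((Finset.range (n+1)).sup' Finset.nonempty_range_add_one
                (fun k => (k:ℝ) * ⟪μ, unitVec θ⟫)) / n := by
          rw [sup'_range_mul]
          field_simp
        rw [Real.norm_eq_abs, hmax, div_sub_div_same, abs_div, abs_of_nonneg (by positivity : (0:ℝ) ≤ (n:ℝ))]
        have hn0' : (0:ℝ) < n := by positivity
        gcongr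
        refine le_trans (abs_sup'_sub_sup'_le _ _ _ _) ?_
        apply Finset.sup'_le
        intro k hk
        refine le_trans ?_ (Finset.le_sup' d hk)
        have : (k:ℝ) * ⟪μ, unitVec θ⟫ = ⟪(k:ℝ) • μ, unitVec θ⟫ :=
          (real_inner_smul_left μ (unitVec θ) (k:ℝ)).symm
        rw [this, ← inner_sub_left]
        calc |⟪x k - (k:ℝ) • μ, unitVec θ⟫| ≤ ‖x k - (k:ℝ) • μ‖ * ‖unitVec θ‖ :=
              abs_real_inner_le_norm _ _
          _ = d k := by rw [norm_unitVec, mul_one]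
    · simpa using hD.mul_const (2 * π)
  have := key.add_const (2 * ‖μ‖)
  simpa using this

/-- Strong law of large numbers for the perimeter of the convex hull of a planar
random walk: `L_n / n → 2‖μ‖` a.s. -/
theorem perimeter_lln
    {Ω : Type*} [MeasureSpace Ω] [IsProbabilityMeasure (ℙ : Measure Ω)]
    (Z : ℕ → Ω → EuclideanSpace ℝ (Fin 2))
    (hmeas : ∀ i, Measurable (Z i))
    (hindep : iIndepFun Z ℙ)
    (hident : ∀ i, IdentDistrib (Z i) (Z 0) ℙ ℙ)
    (hint : Integrable (Z 0) ℙ) :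
    ∀ᵐ ω ∂(ℙ : Measure Ω),
      Tendsto
        (fun n => perimCauchy n (fun k => ∑ i ∈ Finset.range k, Z i ω) / n)
        atTop (nhds (2 * ‖∫ ω, Z 0 ω‖)) := by
  have hpair : Pairwise (Function.onFun (IndepFun · · ℙ) Z) := fun i j hij => hindep.indepFun hij
  filter_upwards [ProbabilityTheory.strong_law_ae Z hint hpair hident] with ω hω
  exact perim_det (fun k => ∑ i ∈ Finset.range k, Z i ω) (by simp) _ hω
end

section
/- Let Z, Z1, Z2, ... be i.i.d. random vectors in ℝ² with E‖Z‖ < ∞ and mean μ = E Z, and let D_n = diam{0, S_1, ..., S_n} with S_k = Z1 + ... + Z_k. Then D_n/n → ‖μ‖ almost surely and in L¹. -/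
open MeasureTheory ProbabilityTheory Filter

open Topology


private lemma diam_lln_det {E : Type*} [NormedAddCommGroup E] [NormedSpace ℝ E]
    (μ : E) (S : ℕ → E) (hS0 : S 0 = 0)
    (h : Tendsto (fun n : ℕ => (n : ℝ)⁻¹ • S n) atTop (𝓝 μ)) :
    Tendsto (fun n : ℕ => Metric.diam (S '' Set.Iic n) / n) atTop (𝓝 ‖μ‖) := by
  rw [Metric.tendsto_atTop]
  intro ε hε
  have hδ : (0:ℝ) < ε / 6 := by positivity
  obtain ⟨N, hN⟩ := Metric.tendsto_atTop.mp h (ε/6) hδ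
  set C : ℝ := ∑ j ∈ Finset.range (N+1), ‖S j - (j:ℝ) • μ‖ with hCdef
  have hC0 : 0 ≤ C := Finset.sum_nonneg fun _ _ => norm_nonneg _
  have key : ∀ k : ℕ, ‖S k - (k:ℝ) • μ‖ ≤ ε/6 * k + C := by
    intro k
    rcases le_or_gt k N with hk | hk
    · have h1 : ‖S k - (k:ℝ) • μ‖ ≤ C :=
        Finset.single_le_sum (f := fun j => ‖S j - (j:ℝ) • μ‖)
          (fun _ _ => norm_nonneg _) (Finset.mem_range.2 (Nat.lt_succ_of_le hk))
      have h2 : (0:ℝ) ≤ (k:ℝ) := Nat.cast_nonneg k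
      nlinarith
    · have hk1 : (0:ℝ) < (k:ℝ) := by exact_mod_cast Nat.lt_of_le_of_lt (Nat.zero_le N) hk
      have hd := hN k hk.le
      rw [dist_eq_norm] at hd
      have heq : S k - (k:ℝ) • μ = (k:ℝ) • ((k:ℝ)⁻¹ • S k - μ) := by
        rw [smul_sub, smul_smul, mul_inv_cancel₀ hk1.ne', one_smul]
      have : ‖S k - (k:ℝ) • μ‖ = (k:ℝ) * ‖(k:ℝ)⁻¹ • S k - μ‖ := by
        rw [heq, norm_smul, Real.norm_eq_abs, abs_of_pos hk1]
      rw [this]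
      nlinarith
  have upper : ∀ n : ℕ, Metric.diam (S '' Set.Iic n) ≤ (n:ℝ) * ‖μ‖ + 2*(ε/6 * n + C) := by
    intro n
    apply Metric.diam_le_of_forall_dist_le (by positivity)
    rintro x ⟨j, hj, rfl⟩ y ⟨k, hk, rfl⟩
    rw [dist_eq_norm]
    have heq : S j - S k = ((S j - (j:ℝ) • μ) - (S k - (k:ℝ) • μ)) + ((j:ℝ)-(k:ℝ)) • μ := by
      rw [sub_smul]; abel
    have h1 : ‖S j - S k‖ ≤ ‖S j - (j:ℝ) • μ‖ + ‖S k - (k:ℝ) • μ‖ + |(j:ℝ)-(k:ℝ)| * ‖μ‖ := by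
      rw [heq]
      refine (norm_add_le _ _).trans ?_
      have := norm_sub_le (S j - (j:ℝ) • μ) (S k - (k:ℝ) • μ)
      rw [norm_smul, Real.norm_eq_abs]
      linarith
    have hjn : (j:ℝ) ≤ n := Nat.cast_le.2 hj
    have hkn : (k:ℝ) ≤ n := Nat.cast_le.2 hk
    have habs : |(j:ℝ)-(k:ℝ)| ≤ (n:ℝ) := by
      rw [abs_sub_le_iff]
      constructor <;> [skip; skip] <;>
        · have := Nat.cast_nonneg (α := ℝ) j
          have := Nat.cast_nonneg (α := ℝ) k
          linarith
    have hkj := key j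
    have hkk := key k
    have hμ0 : (0:ℝ) ≤ ‖μ‖ := norm_nonneg μ
    nlinarith [abs_nonneg ((j:ℝ)-(k:ℝ))]
  have lower : ∀ n : ℕ, (n:ℝ) * ‖μ‖ - (ε/6 * n + C) ≤ Metric.diam (S '' Set.Iic n) := by
    intro n
    have hb : Bornology.IsBounded (S '' Set.Iic n) :=
      ((Set.finite_Iic n).image S).isBounded
    have hmem1 : S n ∈ S '' Set.Iic n := ⟨n, Set.self_mem_Iic, rfl⟩
    have hmem0 : S 0 ∈ S '' Set.Iic n := ⟨0, Set.mem_Iic.2 (Nat.zero_le n), rfl⟩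
    have hd : dist (S n) (S 0) ≤ Metric.diam (S '' Set.Iic n) :=
      Metric.dist_le_diam_of_mem hb hmem1 hmem0
    rw [hS0, dist_zero_right] at hd
    have h2 : (n:ℝ) * ‖μ‖ - ‖S n - (n:ℝ) • μ‖ ≤ ‖S n‖ := by
      have := norm_sub_norm_le ((n:ℝ) • μ) (S n)
      rw [norm_smul, Real.norm_eq_abs, abs_of_nonneg (Nat.cast_nonneg n)] at this
      rw [norm_sub_rev ((n:ℝ) • μ)] at this
      linarith
    have := key n
    linarith
  refine ⟨max 1 (⌈C / (ε/6)⌉₊ + 1), fun n hn => ?_⟩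
  have hn1 : 1 ≤ n := le_trans (le_max_left _ _) hn
  have hn0 : (0:ℝ) < n := by exact_mod_cast hn1
  have hCn : C < ε/6 * n := by
    have h3 : (⌈C / (ε/6)⌉₊ + 1 : ℕ) ≤ n := le_trans (le_max_right _ _) hn
    have h4 : C / (ε/6) < (n:ℝ) := by
      have := Nat.le_ceil (C / (ε/6))
      have h5 : ((⌈C / (ε/6)⌉₊ + 1 : ℕ) : ℝ) ≤ (n:ℝ) := Nat.cast_le.2 h3
      push_cast at h5
      linarith
    rw [div_lt_iff₀ hδ] at h4
    linarith
  rw [Real.dist_eq, abs_sub_lt_iff]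
  have h1 := upper n
  have h2 := lower n
  constructor
  · rw [sub_lt_iff_lt_add, div_lt_iff₀ hn0]
    nlinarith
  · rw [sub_lt_iff_lt_add, ← sub_lt_iff_lt_add', lt_div_iff₀ hn0]
    nlinarith

/-- Law of large numbers for the diameter of a planar random walk:
`D_n / n → ‖μ‖` almost surely and in `L¹`. -/
theorem diameter_lln
    {Ω : Type*} [MeasureSpace Ω] [IsProbabilityMeasure (ℙ : Measure Ω)]
    (Z : ℕ → Ω → EuclideanSpace ℝ (Fin 2))
    (hmeas : ∀ i, Measurable (Z i))
    (hindep : iIndepFun Z ℙ)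
    (hident : ∀ i, IdentDistrib (Z i) (Z 0) ℙ ℙ)
    (hint : Integrable (Z 0) ℙ)
    (D : ℕ → Ω → ℝ)
    (hD : ∀ n ω, D n ω =
      Metric.diam ((fun k => ∑ i ∈ Finset.range k, Z i ω) '' Set.Iic n)) :
    (∀ᵐ ω ∂(ℙ : Measure Ω),
        Tendsto (fun n => D n ω / n) atTop (nhds ‖∫ ω, Z 0 ω‖)) ∧
      Tendsto (fun n => ∫ ω, |D n ω / n - ‖∫ ω', Z 0 ω'‖|) atTop (nhds 0) := by
  set μ : EuclideanSpace ℝ (Fin 2) := ∫ ω, Z 0 ω with hμdef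
  have hSmeas : ∀ k : ℕ, Measurable (fun ω => ∑ i ∈ Finset.range k, Z i ω) :=
    fun k => Finset.measurable_sum _ (fun i _ => hmeas i)
  have hpair : Pairwise (Function.onFun (IndepFun · · ℙ) Z) := fun i j hij => hindep.indepFun hij
  have hae := strong_law_ae Z hint hpair hident
  -- a.s. part
  have h1 : ∀ᵐ ω ∂(ℙ : Measure Ω), Tendsto (fun n => D n ω / n) atTop (𝓝 ‖μ‖) := by
    filter_upwards [hae] with ω hω
    have hdet := diam_lln_det μ (fun k => ∑ i ∈ Finset.range k, Z i ω) (by simp) hω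
    have : (fun n : ℕ => D n ω / n)
        = fun n : ℕ => Metric.diam ((fun k => ∑ i ∈ Finset.range k, Z i ω) '' Set.Iic n) / n := by
      funext n; rw [hD]
    rw [this]
    exact hdet
  refine ⟨h1, ?_⟩
  -- L¹ part
  set I : ℝ := ∫ ω, ‖Z 0 ω‖ with hIdef
  set c : ℝ := 2 * I + ‖μ‖ with hcdef
  have hI0 : 0 ≤ I := integral_nonneg fun ω => norm_nonneg _
  have hc0 : 0 ≤ c := by positivity
  have hnormident : ∀ i, IdentDistrib (fun ω => ‖Z i ω‖) (fun ω => ‖Z 0 ω‖) ℙ ℙ :=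
    fun i => (hident i).comp measurable_norm
  have hnormint : ∀ i, Integrable (fun ω => ‖Z i ω‖) ℙ :=
    fun i => (hnormident i).integrable_iff.2 hint.norm
  have hDm : ∀ n, Measurable (D n) := by
    intro n
    have heq : D n = fun ω =>
        (⨆ j ∈ Set.Iic n, ⨆ k ∈ Set.Iic n,
          edist (∑ i ∈ Finset.range j, Z i ω) (∑ i ∈ Finset.range k, Z i ω)).toReal := by
      funext ω
      rw [hD, Metric.diam]
      congr 1
      simp only [Metric.ediam, iSup_image]
    rw [heq]
    apply Measurable.ennreal_toReal
    apply Measurable.biSup _ (Set.to_countable _)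
    intro j _
    apply Measurable.biSup _ (Set.to_countable _)
    intro k _
    exact (hSmeas j).edist (hSmeas k)
  set F : ℕ → Ω → ℝ := fun n ω => |D n ω / n - ‖μ‖| with hFdef
  set G : ℕ → Ω → ℝ := fun n ω => 2 * ((∑ i ∈ Finset.range n, ‖Z i ω‖) / n) + ‖μ‖ with hGdef
  have hF0 : ∀ n ω, 0 ≤ F n ω := fun n ω => abs_nonneg _
  have hFm : ∀ n, Measurable (F n) := fun n => (((hDm n).div_const _).sub_const _).abs
  have hGm : ∀ n, Measurable (G n) := by
    intro n
    exact (((Finset.measurable_sum _ fun i _ => (hmeas i).norm).div_const _).const_mul 2).add_const _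
  have hGint : ∀ n, Integrable (G n) ℙ := by
    intro n
    exact ((((integrable_finset_sum _ fun i _ => hnormint i)).div_const _).const_mul 2).add (integrable_const _)
  have hFG : ∀ n ω, F n ω ≤ G n ω := by
    intro n ω
    have hDnn : 0 ≤ D n ω := by rw [hD]; exact Metric.diam_nonneg
    have hDle : D n ω ≤ 2 * ∑ i ∈ Finset.range n, ‖Z i ω‖ := by
      rw [hD]
      have hsum0 : 0 ≤ ∑ i ∈ Finset.range n, ‖Z i ω‖ :=
        Finset.sum_nonneg fun _ _ => norm_nonneg _
      apply Metric.diam_le_of_forall_dist_le (by positivity)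
      rintro x ⟨j, hj, rfl⟩ y ⟨k, hk, rfl⟩
      rw [dist_eq_norm]
      have hb : ∀ m : ℕ, m ≤ n → ‖∑ i ∈ Finset.range m, Z i ω‖ ≤ ∑ i ∈ Finset.range n, ‖Z i ω‖ := by
        intro m hm
        refine (norm_sum_le _ _).trans ?_
        exact Finset.sum_le_sum_of_subset_of_nonneg (Finset.range_mono hm)
          (fun _ _ _ => norm_nonneg _)
      have := norm_sub_le (∑ i ∈ Finset.range j, Z i ω) (∑ i ∈ Finset.range k, Z i ω)
      have hbj := hb j hj
      have hbk := hb k hk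
      linarith
    have h2 : F n ω ≤ D n ω / n + ‖μ‖ := by
      refine (abs_sub _ _).trans ?_
      rw [abs_of_nonneg (by positivity), abs_of_nonneg (norm_nonneg _)]
    have h3 : D n ω / n ≤ (2 * ∑ i ∈ Finset.range n, ‖Z i ω‖) / n :=
      div_le_div_of_nonneg_right hDle (Nat.cast_nonneg n)
    have h4 : (2 * ∑ i ∈ Finset.range n, ‖Z i ω‖) / n
        = 2 * ((∑ i ∈ Finset.range n, ‖Z i ω‖) / n) := by ring
    simp only [hGdef]
    linarith [h3, h4 ▸ h3]
  have hGeq : ∀ n : ℕ, 1 ≤ n → ∫ ω, G n ω ∂(ℙ : Measure Ω) = c := by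
    intro n hn
    have hTeq : ∫ ω, (∑ i ∈ Finset.range n, ‖Z i ω‖) ∂(ℙ : Measure Ω) = n * I := by
      rw [integral_finset_sum _ fun i _ => hnormint i]
      have : ∀ i ∈ Finset.range n, ∫ ω, ‖Z i ω‖ ∂(ℙ : Measure Ω) = I :=
        fun i _ => (hnormident i).integral_eq
      rw [Finset.sum_congr rfl this, Finset.sum_const, Finset.card_range, nsmul_eq_mul]
    have hn0 : (n:ℝ) ≠ 0 := by positivity
    simp only [hGdef]
    rw [integral_add (((integrable_finset_sum _ fun i _ => hnormint i).div_const _).const_mul 2)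
      (integrable_const _), integral_const, integral_const_mul, integral_div, hTeq]
    simp only [measure_univ, probReal_univ, smul_eq_mul, one_mul, ENNReal.toReal_one, hcdef]
    rw [mul_comm (n:ℝ) I, mul_div_assoc, div_self hn0, mul_one]
  set A : ℕ → ENNReal := fun n => ∫⁻ ω, ENNReal.ofReal (F n ω) ∂(ℙ : Measure Ω) with hAdef
  set Cc : ENNReal := ENNReal.ofReal c with hCcdef
  have hCct : Cc ≠ ⊤ := ENNReal.ofReal_ne_top
  have hGl : ∀ n : ℕ, 1 ≤ n → ∫⁻ ω, ENNReal.ofReal (G n ω) ∂(ℙ : Measure Ω) = Cc := by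
    intro n hn
    rw [← ofReal_integral_eq_lintegral_ofReal (hGint n)
      (ae_of_all _ fun ω => le_trans (hF0 n ω) (hFG n ω)), hGeq n hn]
  have hAle : ∀ n : ℕ, 1 ≤ n → A n ≤ Cc := by
    intro n hn
    refine le_trans (lintegral_mono fun ω => ENNReal.ofReal_le_ofReal (hFG n ω)) ?_
    exact (hGl n hn).le
  have hsplit : ∀ n : ℕ, 1 ≤ n →
      (∫⁻ ω, ENNReal.ofReal (G n ω - F n ω) ∂(ℙ : Measure Ω)) + A n = Cc := by
    intro n hn
    rw [hAdef, ← lintegral_add_right _ (hFm n).ennreal_ofReal]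
    rw [show (fun ω => ENNReal.ofReal (G n ω - F n ω) + ENNReal.ofReal (F n ω))
        = fun ω => ENNReal.ofReal (G n ω) from funext fun ω => by
      rw [← ENNReal.ofReal_add (sub_nonneg.2 (hFG n ω)) (hF0 n ω), sub_add_cancel]]
    exact hGl n hn
  -- a.e. convergence of F to 0 and of G - F to c
  have hf0 : ∀ᵐ ω ∂(ℙ : Measure Ω), Tendsto (fun n => F n ω) atTop (𝓝 0) := by
    filter_upwards [h1] with ω hω
    have := (hω.sub_const ‖μ‖).abs
    simpa [hFdef] using this
  have hgc : ∀ᵐ ω ∂(ℙ : Measure Ω), Tendsto (fun n => G n ω) atTop (𝓝 c) := by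
    have hsl := strong_law_ae_real (fun i ω => ‖Z i ω‖) hint.norm
      (fun i j hij => (hpair hij).comp measurable_norm measurable_norm) hnormident
    filter_upwards [hsl] with ω hω
    have := (hω.const_mul 2).add_const ‖μ‖
    simpa [hGdef, hcdef, hIdef] using this
  have hfatou : Cc ≤ liminf (fun n => ∫⁻ ω, ENNReal.ofReal (G n ω - F n ω) ∂(ℙ : Measure Ω)) atTop := by
    have hlim : ∀ᵐ ω ∂(ℙ : Measure Ω),
        liminf (fun n => ENNReal.ofReal (G n ω - F n ω)) atTop = Cc := by
      filter_upwards [hgc, hf0] with ω hG hF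
      have ht : Tendsto (fun n => ENNReal.ofReal (G n ω - F n ω)) atTop (𝓝 Cc) := by
        apply (ENNReal.continuous_ofReal.tendsto c).comp
        simpa using hG.sub hF
      exact ht.liminf_eq
    calc Cc = ∫⁻ _ω, Cc ∂(ℙ : Measure Ω) := by simp [measure_univ]
      _ = ∫⁻ ω, liminf (fun n => ENNReal.ofReal (G n ω - F n ω)) atTop ∂(ℙ : Measure Ω) :=
        (lintegral_congr_ae (hlim.mono fun ω h => h.symm))
      _ ≤ liminf (fun n => ∫⁻ ω, ENNReal.ofReal (G n ω - F n ω) ∂(ℙ : Measure Ω)) atTop :=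
        lintegral_liminf_le fun n => ((hGm n).sub (hFm n)).ennreal_ofReal
  have hA0 : Tendsto A atTop (𝓝 0) := by
    rw [ENNReal.tendsto_nhds_zero]
    intro ε hε
    rcases le_or_gt Cc ε with hCe | hCe
    · filter_upwards [eventually_ge_atTop 1] with n hn
      exact (hAle n hn).trans hCe
    · have hCc0 : Cc ≠ 0 := by
        intro h; rw [h] at hCe; exact absurd hCe (by simp)
      have h2 : Cc - ε < Cc := ENNReal.sub_lt_self hCct hCc0 hε.ne'
      have h3 := eventually_lt_of_lt_liminf (h2.trans_le hfatou)
      filter_upwards [h3, eventually_ge_atTop 1] with n hnlt hn1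
      by_contra hcon
      push_neg at hcon
      have hAn : A n ≠ ⊤ := (lt_of_le_of_lt (hAle n hn1) (lt_top_iff_ne_top.2 hCct)).ne
      have heqn : ∫⁻ ω, ENNReal.ofReal (G n ω - F n ω) ∂(ℙ : Measure Ω) = Cc - A n :=
        ENNReal.eq_sub_of_add_eq hAn (hsplit n hn1)
      rw [heqn] at hnlt
      exact absurd (tsub_le_tsub_left hcon.le Cc) (not_le.2 hnlt)
  have hint_eq : ∀ n : ℕ, ∫ ω, F n ω ∂(ℙ : Measure Ω) = (A n).toReal := by
    intro n
    rw [integral_eq_lintegral_of_nonneg_ae (ae_of_all _ (hF0 n)) (hFm n).aestronglyMeasurable]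
  have hfin := (ENNReal.tendsto_toReal (by simp)).comp hA0
  simp only [Function.comp, ENNReal.toReal_zero] at hfin
  have : (fun n => ∫ ω, |D n ω / n - ‖μ‖| ∂(ℙ : Measure Ω)) = fun n => (A n).toReal := by
    funext n
    rw [← hint_eq n]
  rw [show (fun n : ℕ => ∫ ω, |D n ω / ↑n - ‖μ‖|) = fun n => (A n).toReal from this]
  exact hfin
end

section
/- Suppose a_k is a sequence of reals with a_k = c + o(1) as k → ∞, for a constant c. Then ∑_{k=1}^n a_k/k = c·log n + o(log n) as n → ∞. Consequently, for a planar random walk with E(‖Z‖²)<∞ and drift μ ≠ 0, the Spitzer–Widom formula E L_n = 2∑_{k=1}^n E‖S_k‖/k together with E‖S_k‖ = ‖μ‖k + σ_{μ⊥}²/(2‖μ‖) + o(1) yields E L_n = 2‖μ‖n + (σ_{μ⊥}²/‖μ‖ + o(1))·log n. -/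
open Filter Real

lemma log_nat_atTop : Tendsto (fun n : ℕ => Real.log n) atTop atTop :=
  Real.tendsto_log_atTop.comp tendsto_natCast_atTop_atTop

lemma harmonic_le_log_add_one {n : ℕ} (hn : 1 ≤ n) : (harmonic n : ℝ) ≤ Real.log n + 1 := by
  have h := Real.strictAnti_eulerMascheroniSeq'.antitone hn
  rw [Real.eulerMascheroniSeq'_one] at h
  simp only [Real.eulerMascheroniSeq', Nat.one_le_iff_ne_zero.mp hn, if_false] at h
  linarith

lemma harmonic_eq_sum_Icc_real (n : ℕ) :
    (harmonic n : ℝ) = ∑ k ∈ Finset.Icc 1 n, ((k : ℝ))⁻¹ := by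
  rw [harmonic_eq_sum_Icc]
  push_cast
  rfl

lemma aux_zero (b : ℕ → ℝ) (hb : Tendsto b atTop (nhds 0)) :
    Tendsto (fun n => (∑ k ∈ Finset.Icc 1 n, b k / k) / Real.log n) atTop (nhds 0) := by
  rw [NormedAddCommGroup.tendsto_nhds_zero]
  intro ε hε
  obtain ⟨N, hN⟩ := Metric.tendsto_atTop.mp hb (ε / 4) (by positivity)
  simp only [Real.dist_eq, sub_zero] at hN
  set C := ∑ k ∈ Finset.Icc 1 N, |b k| / k with hCdef
  have hC0 : 0 ≤ C := Finset.sum_nonneg fun k _ => by positivity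
  have hsum : ∀ n, N ≤ n → 1 ≤ n →
      |∑ k ∈ Finset.Icc 1 n, b k / k| ≤ C + ε / 4 * (Real.log n + 1) := by
    intro n hn hn1
    have hsplit : ∑ k ∈ Finset.Icc 1 n, b k / k
        = ∑ k ∈ Finset.Icc 1 N, b k / k + ∑ k ∈ Finset.Ioc N n, b k / k := by
      rw [show Finset.Icc 1 n = Finset.Ioc 0 n from Finset.Icc_add_one_left_eq_Ioc 0 n,
        show Finset.Icc 1 N = Finset.Ioc 0 N from Finset.Icc_add_one_left_eq_Ioc 0 N,
        Finset.sum_Ioc_consecutive _ (Nat.zero_le N) hn]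
    have h1 : |∑ k ∈ Finset.Icc 1 N, b k / k| ≤ C := by
      refine (Finset.abs_sum_le_sum_abs _ _).trans ?_
      apply Finset.sum_le_sum
      intro k hk
      rw [abs_div, abs_of_nonneg (by positivity : (0:ℝ) ≤ (k:ℝ))]
    have h2 : |∑ k ∈ Finset.Ioc N n, b k / k| ≤ ε / 4 * (harmonic n : ℝ) := by
      refine (Finset.abs_sum_le_sum_abs _ _).trans ?_
      have step : ∑ k ∈ Finset.Ioc N n, |b k / k| ≤ ∑ k ∈ Finset.Ioc N n, ε / 4 * (k : ℝ)⁻¹ := by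
        apply Finset.sum_le_sum
        intro k hk
        have hk' : N ≤ k := le_of_lt (Finset.mem_Ioc.mp hk).1
        have hbk := le_of_lt (hN k hk')
        rw [abs_div, abs_of_nonneg (by positivity : (0:ℝ) ≤ (k:ℝ)), div_eq_mul_inv]
        gcongr
      refine step.trans ?_
      rw [harmonic_eq_sum_Icc_real, ← Finset.mul_sum]
      apply mul_le_mul_of_nonneg_left ?_ (by positivity : (0:ℝ) ≤ ε / 4)
      refine Finset.sum_le_sum_of_subset_of_nonneg ?_ (fun k _ _ => by positivity)
      intro k hk
      rw [Finset.mem_Ioc] at hk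
      rw [Finset.mem_Icc]
      omega
    calc |∑ k ∈ Finset.Icc 1 n, b k / k| ≤ C + ε/4 * (harmonic n : ℝ) := by
          rw [hsplit]; exact (abs_add_le _ _).trans (by gcongr)
      _ ≤ C + ε / 4 * (Real.log n + 1) := by
          have := harmonic_le_log_add_one hn1
          nlinarith
  have hKlog : ∀ᶠ n : ℕ in atTop, max 1 (4 / ε * (C + ε / 4)) ≤ Real.log n :=
    log_nat_atTop.eventually_ge_atTop _
  filter_upwards [eventually_ge_atTop N, eventually_ge_atTop 1, hKlog] with n hn hn1 hlog
  have hlog1 : 1 ≤ Real.log n := le_trans (le_max_left _ _) hlog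
  have hlogC : 4 / ε * (C + ε / 4) ≤ Real.log n := le_trans (le_max_right _ _) hlog
  have hlogpos : 0 < Real.log n := by linarith
  have hb1 := hsum n hn hn1
  rw [Real.norm_eq_abs, abs_div, abs_of_pos hlogpos, div_lt_iff₀ hlogpos]
  have key : C + ε / 4 ≤ ε / 4 * Real.log n := by
    have : 4 / ε * (C + ε / 4) * (ε / 4) = C + ε / 4 := by field_simp
    nlinarith
  nlinarith

lemma main_part (a : ℕ → ℝ) (c : ℝ) (ha : Tendsto a atTop (nhds c)) :
    Tendsto (fun n => (∑ k ∈ Finset.Icc 1 n, a k / k) / Real.log n) atTop (nhds c) := by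
  have T1 := aux_zero (fun k => a k - c) (by simpa using ha.sub_const c)
  have T2 : Tendsto (fun n : ℕ => (harmonic n : ℝ) / Real.log n) atTop (nhds 1) := by
    have h0 : Tendsto (fun n : ℕ => ((harmonic n : ℝ) - Real.log n) / Real.log n) atTop
        (nhds 0) := Tendsto.div_atTop Real.tendsto_harmonic_sub_log log_nat_atTop
    have := h0.add tendsto_const_nhds (b := (1:ℝ))
    rw [zero_add] at this
    refine this.congr' ?_
    filter_upwards [eventually_ge_atTop 2] with n hn
    have hlogpos : 0 < Real.log n := by
      apply Real.log_pos; exact_mod_cast by omega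
    field_simp
    ring
  have heq : ∀ n : ℕ, (∑ k ∈ Finset.Icc 1 n, a k / k) / Real.log n
      = (∑ k ∈ Finset.Icc 1 n, (a k - c) / k) / Real.log n
        + c * ((harmonic n : ℝ) / Real.log n) := by
    intro n
    rw [harmonic_eq_sum_Icc_real, mul_div_assoc' c, ← add_div, Finset.mul_sum]
    congr 1
    rw [← Finset.sum_add_distrib]
    apply Finset.sum_congr rfl
    intro k hk
    rw [sub_div]
    ring
  have := T1.add (T2.const_mul c)
  rw [zero_add, mul_one] at this
  exact this.congr (fun n => (heq n).symm)

/-- If `a k → c`, then `∑_{k=1}^n a_k/k = c log n + o(log n)`. Consequently,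
via the Spitzer–Widom formula `E L_n = 2 ∑_{k=1}^n E‖S_k‖ / k` and the expansion
`E‖S_k‖ = ‖μ‖k + σ_{μ⊥}²/(2‖μ‖) + o(1)`, one gets
`E L_n = 2‖μ‖n + (σ_{μ⊥}²/‖μ‖ + o(1)) log n`. -/
theorem sum_div_log_asymptotics
    (a : ℕ → ℝ) (c : ℝ) (ha : Tendsto a atTop (nhds c)) :
    Tendsto (fun n => (∑ k ∈ Finset.Icc 1 n, a k / k) / Real.log n)
        atTop (nhds c) ∧
      ∀ (m σperp2 : ℝ) (ES EL : ℕ → ℝ), 0 < m →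
        (∀ n, EL n = 2 * ∑ k ∈ Finset.Icc 1 n, ES k / k) →
        Tendsto (fun k => ES k - m * k) atTop (nhds (σperp2 / (2 * m))) →
        Tendsto (fun n => (EL n - 2 * m * n) / Real.log n) atTop
          (nhds (σperp2 / m)) := by
  refine ⟨main_part a c ha, ?_⟩
  intro m σperp2 ES EL hm hEL hES
  have hES2 : Tendsto (fun k : ℕ => 2 * (ES k - m * k)) atTop (nhds (σperp2 / m)) := by
    have := hES.const_mul 2
    have h2 : 2 * (σperp2 / (2 * m)) = σperp2 / m := by
      field_simp
    rwa [h2] at this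
  have key := main_part _ _ hES2
  refine key.congr (fun n => ?_)
  congr 1
  have hnum : ∑ k ∈ Finset.Icc 1 n, (2 * (ES k - m * k)) / k
      = 2 * (∑ k ∈ Finset.Icc 1 n, ES k / k) - 2 * m * n := by
    have : ∀ k ∈ Finset.Icc 1 n, (2 * (ES k - m * k)) / (k:ℝ)
        = 2 * (ES k / k) - 2 * m := by
      intro k hk
      have hk1 : 1 ≤ k := (Finset.mem_Icc.mp hk).1
      have hk0 : (k : ℝ) ≠ 0 := by positivity
      field_simp
    rw [Finset.sum_congr rfl this, Finset.sum_sub_distrib, Finset.sum_const,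
      Nat.card_Icc, Finset.mul_sum]
    simp
    ring
  rw [hnum, hEL n]
end

section
/- Let (ξ_i) be i.i.d. real random variables with Eξ = 0 and E(|ξ|^p) < ∞ for some p > 2, and set T_{n,j} = ∑_{i=n−j}^{n} ξ_i. Then there exist β0, ε0 ∈ (0,1/2) such that for all β ∈ (0,β0) and ε ∈ (0,ε0), almost surely max_{0≤j≤n^β} |T_{n,j}| / n^{1/2−ε} → 0 as n → ∞. -/
open MeasureTheory ProbabilityTheory Filter
open scoped ENNReal NNReal

lemma det_max {a : ℕ → ℝ} {α : ℝ} (hα : 0 < α)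
    (h : ∀ c : ℝ, 0 < c → ∀ᶠ n : ℕ in atTop, a n ≤ c * (n : ℝ) ^ α) :
    ∀ c : ℝ, 0 < c → ∀ᶠ n : ℕ in atTop,
      (Finset.range (n + 1)).sup' Finset.nonempty_range_add_one a ≤ c * (n : ℝ) ^ α := by
  intro c hc
  obtain ⟨N, hN⟩ := (h c hc).exists_forall_of_atTop
  set M : ℝ := (Finset.range (N + 1)).sup' Finset.nonempty_range_add_one a with hM
  have htop : Tendsto (fun n : ℕ => c * (n : ℝ) ^ α) atTop atTop :=
    (tendsto_rpow_atTop hα |>.comp tendsto_natCast_atTop_atTop).const_mul_atTop hc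
  filter_upwards [htop.eventually_ge_atTop M, eventually_ge_atTop N] with n hn hnN
  apply Finset.sup'_le
  intro i hi
  rcases le_or_gt i N with hiN | hiN
  · exact le_trans (Finset.le_sup' a (by simpa using Nat.lt_succ_of_le hiN)) hn
  · refine (hN i hiN.le).trans ?_
    have : (i : ℝ) ^ α ≤ (n : ℝ) ^ α := by
      apply Real.rpow_le_rpow (by positivity) _ hα.le
      exact_mod_cast Nat.lt_succ_iff.mp (Finset.mem_range.mp hi)
    nlinarith [this]

lemma tendsto_of_forall_eventually_le {f : ℕ → ℝ} (h0 : ∀ n, 0 ≤ f n)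
    (h : ∀ c : ℝ, 0 < c → ∀ᶠ n : ℕ in atTop, f n ≤ c) :
    Tendsto f atTop (nhds 0) := by
  rw [Metric.tendsto_atTop]
  intro ε hε
  obtain ⟨N, hN⟩ := (h (ε / 2) (by linarith)).exists_forall_of_atTop
  exact ⟨N, fun n hn => by
    rw [Real.dist_eq, abs_sub_comm, abs_of_nonpos (by linarith [h0 n])]
    have := hN n hn; linarith [h0 n]⟩

lemma key_bc {Ω : Type*} [MeasureSpace Ω] [IsProbabilityMeasure (ℙ : Measure Ω)]
    (ξ : ℕ → Ω → ℝ) (hmeas : ∀ i, Measurable (ξ i))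
    (hident : ∀ i, IdentDistrib (ξ i) (ξ 0) ℙ ℙ)
    {p : ℝ} (hp : 0 < p) (hLp : MemLp (ξ 0) (ENNReal.ofReal p) ℙ)
    {α : ℝ} (hαp : 1 < α * p) {c : ℝ} (hc : 0 < c) :
    ∀ᵐ ω ∂(ℙ : Measure Ω), ∀ᶠ n : ℕ in atTop, |ξ n ω| ≤ c * (n : ℝ) ^ α := by
  set q : ℝ≥0∞ := ENNReal.ofReal p with hqdef
  have hq0 : q ≠ 0 := by simp [hqdef, ENNReal.ofReal_eq_zero, not_le, hp]
  have hqt : q ≠ ∞ := ENNReal.ofReal_ne_top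
  have hqr : q.toReal = p := ENNReal.toReal_ofReal hp.le
  set C : ℝ≥0∞ := eLpNorm (ξ 0) q ℙ ^ p with hC
  have hCne : C ≠ ∞ := by
    rw [hC]
    exact (ENNReal.rpow_lt_top_of_nonneg hp.le hLp.eLpNorm_lt_top.ne).ne
  set t : ℕ → ℝ := fun n => c * ((n + 1 : ℕ) : ℝ) ^ α with ht
  have htpos : ∀ n, 0 < t n := fun n => by
    have : (0:ℝ) < ((n+1 : ℕ) : ℝ) := by positivity
    positivity
  set s : ℕ → Set Ω := fun n => {ω | ENNReal.ofReal (t n) ≤ (‖ξ (n + 1) ω‖₊ : ℝ≥0∞)} with hs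
  have hbound : ∀ n, ℙ (s n) ≤ ENNReal.ofReal ((t n)⁻¹ ^ p) * C := by
    intro n
    have h1 := meas_ge_le_mul_pow_eLpNorm_enorm (ℙ : Measure Ω) hq0 hqt
      (hmeas (n + 1)).aestronglyMeasurable
      (ε := ENNReal.ofReal (t n)) (by simp [ENNReal.ofReal_eq_zero, not_le, htpos n])
      (fun h => absurd h ENNReal.ofReal_ne_top)
    rw [(hident (n + 1)).eLpNorm_eq (p := q)] at h1
    refine h1.trans (le_of_eq ?_)
    rw [hqr, ← ENNReal.ofReal_inv_of_pos (htpos n),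
      ENNReal.ofReal_rpow_of_pos (by positivity), hC]
  have hsumr : Summable (fun n : ℕ => (t n)⁻¹ ^ p) := by
    have h1 : Summable (fun n : ℕ => (n : ℝ) ^ (-(α * p))) :=
      Real.summable_nat_rpow.2 (by linarith)
    have h2 : Summable (fun n : ℕ => ((n + 1 : ℕ) : ℝ) ^ (-(α * p))) :=
      (summable_nat_add_iff 1).2 h1
    apply Summable.of_nonneg_of_le (fun n => by positivity) _ (h2.mul_left (c⁻¹ ^ p))
    intro n
    have hn : (0:ℝ) < ((n+1:ℕ):ℝ) := by positivity
    rw [ht, mul_inv, Real.mul_rpow (by positivity) (by positivity),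
      ← Real.rpow_neg hn.le, ← Real.rpow_mul hn.le, neg_mul]
  have hsum : (∑' n, ℙ (s n)) ≠ ∞ := by
    have h1 : (∑' n, ℙ (s n)) ≤ ∑' n, ENNReal.ofReal ((t n)⁻¹ ^ p) * C :=
      ENNReal.tsum_le_tsum hbound
    rw [ENNReal.tsum_mul_right, ← ENNReal.ofReal_tsum_of_nonneg (fun n => by positivity) hsumr]
      at h1
    exact (h1.trans_lt (ENNReal.mul_lt_top ENNReal.ofReal_lt_top hCne.lt_top)).ne
  filter_upwards [ae_eventually_notMem hsum] with ω hω
  obtain ⟨N, hN⟩ := hω.exists_forall_of_atTop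
  rw [eventually_atTop]
  refine ⟨N + 1, fun n hn => ?_⟩
  obtain ⟨m, rfl⟩ : ∃ m, n = m + 1 := ⟨n - 1, by omega⟩
  have h2 := hN m (by omega)
  rw [hs, Set.mem_setOf_eq, ← enorm_eq_nnnorm, ← ofReal_norm, not_le,
    ENNReal.ofReal_lt_ofReal_iff (htpos m)] at h2
  rw [← Real.norm_eq_abs]
  exact h2.le

/-- For centered i.i.d. real random variables with finite `p`-th moment, `p > 2`,
the maximal sum of the last `≤ n^β` increments up to time `n` is `o(n^{1/2−ε})`
a.s., for suitably small `β, ε`. -/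
theorem max_tail_sums_small
    {Ω : Type*} [MeasureSpace Ω] [IsProbabilityMeasure (ℙ : Measure Ω)]
    (ξ : ℕ → Ω → ℝ)
    (hmeas : ∀ i, Measurable (ξ i))
    (hindep : iIndepFun ξ ℙ)
    (hident : ∀ i, IdentDistrib (ξ i) (ξ 0) ℙ ℙ)
    (p : ℝ) (hp : 2 < p) (hLp : MemLp (ξ 0) (ENNReal.ofReal p) ℙ)
    (hmean : (∫ ω, ξ 0 ω) = 0) :
    ∃ β₀ ∈ Set.Ioo (0 : ℝ) (1 / 2), ∃ ε₀ ∈ Set.Ioo (0 : ℝ) (1 / 2),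
      ∀ β ∈ Set.Ioo (0 : ℝ) β₀, ∀ ε ∈ Set.Ioo (0 : ℝ) ε₀,
        ∀ᵐ ω ∂(ℙ : Measure Ω),
          Tendsto
            (fun n : ℕ =>
              ((Finset.range (⌊(n : ℝ) ^ β⌋₊ + 1)).sup' Finset.nonempty_range_add_one
                  (fun j => |∑ i ∈ Finset.Icc (n - j) n, ξ i ω|)) /
                (n : ℝ) ^ ((1 : ℝ) / 2 - ε))
            atTop (nhds 0) := by
  have hp0 : (0:ℝ) < p := by linarith
  have hinv : (1:ℝ)/p < 1/2 := by
    rw [div_lt_div_iff₀ hp0 (by norm_num)]; linarith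
  have hinv0 : (0:ℝ) < 1/p := by positivity
  obtain ⟨δ, hδdef⟩ : ∃ δ : ℝ, δ = 1/2 - 1/p := ⟨_, rfl⟩
  have hδ : 0 < δ := by rw [hδdef]; linarith
  obtain ⟨α, hαdef⟩ : ∃ α : ℝ, α = 1/p + δ/4 := ⟨_, rfl⟩
  have hα : 0 < α := by rw [hαdef]; positivity
  have hαp : 1 < α * p := by
    have h1 : α * p = 1 + δ * p / 4 := by
      rw [hαdef]; field_simp
    rw [h1]; nlinarith [mul_pos hδ hp0]
  refine ⟨δ/4, ⟨by positivity, by rw [hδdef]; linarith⟩, δ/4,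
    ⟨by positivity, by rw [hδdef]; linarith⟩, ?_⟩
  intro β hβ ε hε
  have key : ∀ᵐ ω ∂(ℙ : Measure Ω), ∀ k : ℕ,
      ∀ᶠ n : ℕ in atTop, |ξ n ω| ≤ ((k:ℝ)+1)⁻¹ * (n:ℝ)^α := by
    rw [ae_all_iff]
    intro k
    exact key_bc ξ hmeas hident hp0 hLp hαp (by positivity)
  filter_upwards [key] with ω hω
  have hsmall : ∀ c : ℝ, 0 < c → ∀ᶠ n : ℕ in atTop, |ξ n ω| ≤ c * (n:ℝ)^α := by
    intro c hc
    obtain ⟨k, hk⟩ := exists_nat_gt c⁻¹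
    filter_upwards [hω k] with n hn
    refine hn.trans (mul_le_mul_of_nonneg_right ?_ (Real.rpow_nonneg (Nat.cast_nonneg n) _))
    have h1 : c⁻¹ < (k:ℝ)+1 := by linarith
    calc ((k:ℝ)+1)⁻¹ ≤ (c⁻¹)⁻¹ := by
          apply inv_anti₀ (by positivity) h1.le
      _ = c := inv_inv c
  have hmax := det_max hα hsmall
  apply tendsto_of_forall_eventually_le
  · intro n
    apply div_nonneg _ (Real.rpow_nonneg (Nat.cast_nonneg n) _)
    exact le_trans (abs_nonneg _)
      (Finset.le_sup' (fun j => |∑ i ∈ Finset.Icc (n - j) n, ξ i ω|)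
        (Finset.mem_range.mpr (Nat.succ_pos _)))
  · intro c hc
    filter_upwards [hmax (c/2) (by linarith), eventually_ge_atTop 1] with n h1 hn1
    set m : ℝ := (Finset.range (n+1)).sup' Finset.nonempty_range_add_one
      (fun i => |ξ i ω|) with hm
    have hn0 : (0:ℝ) < (n:ℝ) := by exact_mod_cast hn1
    have hn1' : (1:ℝ) ≤ (n:ℝ) := by exact_mod_cast hn1
    have hm0 : 0 ≤ m :=
      le_trans (abs_nonneg _) (Finset.le_sup' (fun i => |ξ i ω|)
        (Finset.mem_range.mpr n.succ_pos))
    have hB : ((⌊(n:ℝ)^β⌋₊ : ℝ) + 1) ≤ 2 * (n:ℝ)^β := by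
      have h2 : (⌊(n:ℝ)^β⌋₊ : ℝ) ≤ (n:ℝ)^β := Nat.floor_le (by positivity)
      have h3 : (1:ℝ) ≤ (n:ℝ)^β := Real.one_le_rpow hn1' hβ.1.le
      linarith
    have hMle : (Finset.range (⌊(n:ℝ)^β⌋₊+1)).sup' Finset.nonempty_range_add_one
        (fun j => |∑ i ∈ Finset.Icc (n - j) n, ξ i ω|)
        ≤ ((⌊(n:ℝ)^β⌋₊:ℝ) + 1) * m := by
      apply Finset.sup'_le
      intro j hj
      have hcard : ((Finset.Icc (n-j) n).card : ℝ) ≤ (⌊(n:ℝ)^β⌋₊:ℝ) + 1 := by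
        have hj' : j ≤ ⌊(n:ℝ)^β⌋₊ := Nat.lt_succ_iff.mp (Finset.mem_range.mp hj)
        have : (Finset.Icc (n-j) n).card = n + 1 - (n - j) := Nat.card_Icc _ _
        have hcn : (Finset.Icc (n-j) n).card ≤ ⌊(n:ℝ)^β⌋₊ + 1 := by omega
        exact_mod_cast hcn
      calc |∑ i ∈ Finset.Icc (n - j) n, ξ i ω|
          ≤ ∑ i ∈ Finset.Icc (n - j) n, |ξ i ω| := Finset.abs_sum_le_sum_abs _ _
        _ ≤ ∑ _i ∈ Finset.Icc (n - j) n, m := by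
            apply Finset.sum_le_sum
            intro i hi
            exact Finset.le_sup' (fun i => |ξ i ω|)
              (Finset.mem_range.mpr (Nat.lt_succ_of_le (Finset.mem_Icc.mp hi).2))
        _ = ((Finset.Icc (n-j) n).card : ℝ) * m := by
            rw [Finset.sum_const, nsmul_eq_mul]
        _ ≤ ((⌊(n:ℝ)^β⌋₊:ℝ) + 1) * m := mul_le_mul_of_nonneg_right hcard hm0
    have hall : (Finset.range (⌊(n:ℝ)^β⌋₊+1)).sup' Finset.nonempty_range_add_one
        (fun j => |∑ i ∈ Finset.Icc (n - j) n, ξ i ω|) ≤ c * (n:ℝ)^(β+α) := by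
      refine hMle.trans ?_
      calc ((⌊(n:ℝ)^β⌋₊:ℝ) + 1) * m ≤ (2*(n:ℝ)^β) * ((c/2) * (n:ℝ)^α) :=
            mul_le_mul hB h1 hm0 (by positivity)
        _ = c * (n:ℝ)^(β+α) := by rw [Real.rpow_add hn0 β α]; ring
    rw [div_le_iff₀ (by positivity : (0:ℝ) < (n:ℝ)^((1:ℝ)/2 - ε))]
    refine hall.trans ?_
    have hexp : β + α ≤ 1/2 - ε := by
      have hb2 := hβ.2
      have he2 := hε.2
      rw [hαdef, hδdef]
      rw [hδdef] at hb2 he2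
      linarith
    calc c * (n:ℝ)^(β+α) ≤ c * (n:ℝ)^((1:ℝ)/2-ε) := by
          apply mul_le_mul_of_nonneg_left _ hc.le
          exact Real.rpow_le_rpow_of_exponent_le hn1' hexp
      _ ≤ c * (n:ℝ)^((1:ℝ)/2-ε) := le_refl _
end

section
/- Let (Z_i) be i.i.d. in ℝ², S_n the partial sums, and suppose E(‖Z‖²) < ∞, μ = E Z ≠ 0, and the component of Z along μ is a.s. constant (σ_μ² = 0). Fix β ∈ (0,1). Then almost surely, for all but finitely many n, the diameter D_n = max_{0≤i,j≤n} ‖S_j − S_i‖ is attained with i ≤ n^β and n − n^β ≤ j ≤ n, i.e., D_n = max over 0 ≤ i ≤ n^β, n − n^β ≤ j ≤ n of ‖S_j − S_i‖. -/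
open MeasureTheory ProbabilityTheory Filter
open scoped RealInnerProductSpace

open scoped NNReal ENNReal

set_option maxHeartbeats 1000000

lemma aux_max_bound {Ω : Type*} [MeasureSpace Ω] [IsProbabilityMeasure (ℙ : Measure Ω)]
    (X : ℕ → Ω → ℝ) (hmeas : ∀ i, Measurable (X i))
    (hindep : iIndepFun X ℙ)
    (hident : ∀ i, IdentDistrib (X i) (X 0) ℙ ℙ)
    (hL2 : MemLp (X 0) 2 ℙ) (hmean : ∫ ω, X 0 ω ∂ℙ = 0)
    {a : ℝ} (ha : a ∈ Set.Ioo (1/2 : ℝ) 1) :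
    ∀ᵐ ω ∂(ℙ : Measure Ω), ∀ᶠ n : ℕ in atTop,
      ∀ k ≤ n, |∑ i ∈ Finset.range k, X i ω| ≤ 2 * (n : ℝ) ^ a := by
  have hSM : ∀ i, StronglyMeasurable (X i) := fun i => (hmeas i).stronglyMeasurable
  have hL2i : ∀ i, MemLp (X i) 2 ℙ := fun i => (hident i).symm.memLp_snd hL2
  have hint : ∀ i, Integrable (X i) ℙ := fun i => (hL2i i).integrable one_le_two
  have hmeani : ∀ i, ∫ ω, X i ω ∂ℙ = 0 := fun i => by
    rw [(hident i).integral_eq]; exact hmean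
  set ℱ := Filtration.natural X hSM with hℱ
  set f : ℕ → Ω → ℝ := fun n ω => ∑ i ∈ Finset.range (n + 1), X i ω with hf
  have hadp : StronglyAdapted ℱ f := by
    intro n
    refine Finset.stronglyMeasurable_fun_sum _ fun i hi => ?_
    exact ((Filtration.stronglyAdapted_natural hSM i).mono
      (ℱ.mono (Nat.lt_succ_iff.mp (Finset.mem_range.mp hi))))
  have hfint : ∀ n, Integrable (f n) ℙ := fun n =>
    integrable_finset_sum _ fun i _ => hint i
  have hmart : Martingale f ℱ ℙ := by
    refine martingale_nat hadp hfint fun n => ?_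
    have h1 : f (n + 1) = f n + X (n + 1) := by
      funext ω; simp [hf, Finset.sum_range_succ]
    rw [h1]
    refine EventuallyEq.symm ?_
    calc (ℙ : Measure Ω)[f n + X (n + 1)|ℱ n]
        =ᵐ[ℙ] (ℙ : Measure Ω)[f n|ℱ n] + (ℙ : Measure Ω)[X (n + 1)|ℱ n] :=
          condExp_add (hfint n) (hint (n + 1)) _
      _ =ᵐ[ℙ] f n + fun _ => (0 : ℝ) := by
          refine EventuallyEq.add ?_ ?_
          · rw [condExp_of_stronglyMeasurable (ℱ.le n) (hadp n) (hfint n)]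
          · refine (hindep.condExp_natural_ae_eq_of_lt hSM (Nat.lt_succ_self n)).trans ?_
            rw [hmeani (n + 1)]
      _ = f n := by funext ω; simp
  have habs : Submartingale (fun n ω => |f n ω|) ℱ ℙ := by
    have h := hmart.submartingale.sup hmart.neg.submartingale
    have heq : f ⊔ -f = fun n ω => |f n ω| := by
      funext n ω
      simp [Pi.sup_apply, abs_eq_max_neg, max_def]
    rwa [heq] at h
  -- variance bound
  set v0 : ℝ := variance (X 0) ℙ with hv0def
  have hv0 : 0 ≤ v0 := variance_nonneg _ _
  have hfL2 : ∀ n, MemLp (f n) 2 ℙ := by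
    intro n
    have := memLp_finset_sum' (μ := (ℙ : Measure Ω)) (Finset.range (n+1))
      (fun i _ => hL2i i)
    convert this using 1
    funext ω; simp [hf]
  have hvar : ∀ n : ℕ, variance (f n) ℙ = (n + 1 : ℝ) * v0 := by
    intro n
    have h1 : f n = ∑ i ∈ Finset.range (n+1), X i := by
      funext ω; simp [hf]
    rw [h1, IndepFun.variance_sum (fun i _ => hL2i i)
      (fun i _ j _ hij => hindep.indepFun hij)]
    have h2 : ∀ i ∈ Finset.range (n+1), variance (X i) ℙ = v0 :=
      fun i _ => (hident i).variance_eq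
    rw [Finset.sum_congr rfl h2, Finset.sum_const, Finset.card_range, nsmul_eq_mul]
    push_cast; ring
  have hfmean : ∀ n, ∫ ω, f n ω ∂ℙ = 0 := by
    intro n
    rw [hf]
    rw [integral_finset_sum _ (fun i _ => hint i)]
    simp [hmeani]
  have hI : ∀ n : ℕ, ∫ ω, |f n ω| ∂ℙ ≤ Real.sqrt ((n + 1 : ℝ) * v0) := by
    intro n
    have habsm : MemLp (fun ω => |f n ω|) 2 ℙ := by
      have := (hfL2 n).abs
      simpa [Pi.abs_def] using this
    have h1 : variance (fun ω => |f n ω|) ℙ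
        = (∫ ω, |f n ω| ^ 2 ∂ℙ) - (∫ ω, |f n ω| ∂ℙ) ^ 2 := by
      simpa using variance_eq_sub habsm
    have h2 : variance (f n) ℙ = ∫ ω, f n ω ^ 2 ∂ℙ := by
      rw [variance_eq_sub (hfL2 n), hfmean n]; simp [sq]
    have h4 : (∫ ω, |f n ω| ^ 2 ∂ℙ) = ∫ ω, f n ω ^ 2 ∂ℙ := by
      congr 1; funext ω; exact sq_abs _
    have h3 : (∫ ω, |f n ω| ∂ℙ) ^ 2 ≤ variance (f n) ℙ := by
      nlinarith [variance_nonneg (fun ω => |f n ω|) ℙ]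
    have h5 : 0 ≤ ∫ ω, |f n ω| ∂ℙ := integral_nonneg fun ω => abs_nonneg _
    rw [← hvar n]
    exact (Real.le_sqrt h5 (variance_nonneg _ _)).mpr h3
  -- maximal inequality and Borel-Cantelli
  set r : ℝ := (2 : ℝ) ^ ((1:ℝ)/2 - a) with hr
  have hr0 : 0 ≤ r := le_of_lt (Real.rpow_pos_of_pos two_pos _)
  have hr1 : r < 1 := Real.rpow_lt_one_of_one_lt_of_neg one_lt_two (by linarith [ha.1])
  set C : ℝ := Real.sqrt v0 * (2 : ℝ) ^ (1 - a) with hC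
  have hC0 : 0 ≤ C := mul_nonneg (Real.sqrt_nonneg _) (le_of_lt (Real.rpow_pos_of_pos two_pos _))
  set ε : ℕ → ℝ≥0 := fun K => ⟨((2:ℝ) ^ (K+1:ℕ)) ^ a, by positivity⟩ with hε
  have hεpos : ∀ K, (0:ℝ) < (ε K : ℝ) := fun K => by
    show (0:ℝ) < ((2:ℝ) ^ (K+1:ℕ)) ^ a
    positivity
  set s : ℕ → Set Ω := fun K => {ω | (ε K : ℝ) ≤
    (Finset.range (2 ^ (K + 1) + 1)).sup' Finset.nonempty_range_add_one fun k => |f k ω|} with hs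
  have hkey : ∀ K : ℕ, Real.sqrt (((2:ℕ) ^ (K + 1) : ℝ) + 1) * Real.sqrt v0
      ≤ (ε K : ℝ) * (C * r ^ K) := by
    intro K
    have h1 : ((2:ℕ) ^ (K + 1) : ℝ) + 1 ≤ (2:ℝ) ^ (K + 2 : ℕ) := by
      push_cast
      nlinarith [one_le_pow₀ (one_le_two : (1:ℝ) ≤ 2) (n := K+1), pow_succ (2:ℝ) (K+1)]
    have h2 : Real.sqrt (((2:ℕ) ^ (K + 1) : ℝ) + 1) ≤ (2:ℝ) ^ (((K:ℝ) + 2)/2) := by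
      refine (Real.sqrt_le_sqrt h1).trans ?_
      rw [← Real.rpow_natCast 2 (K+2), Real.sqrt_eq_rpow, ← Real.rpow_mul (by norm_num)]
      apply le_of_eq
      congr 1
      push_cast; ring
    have h3 : (ε K : ℝ) * (C * r ^ K) = Real.sqrt v0 * (2:ℝ) ^ (((K:ℝ) + 2)/2) := by
      have e1 : (ε K : ℝ) = (2:ℝ) ^ (((K:ℝ) + 1) * a) := by
        show ((2:ℝ) ^ (K+1:ℕ)) ^ a = _
        rw [← Real.rpow_natCast 2 (K+1), ← Real.rpow_mul (by norm_num)]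
        congr 1; push_cast; ring
      have e2 : r ^ K = (2:ℝ) ^ (((1:ℝ)/2 - a) * K) := by
        rw [hr, ← Real.rpow_natCast ((2:ℝ) ^ ((1:ℝ)/2 - a)) K, ← Real.rpow_mul (by norm_num)]
      rw [e1, e2, hC]
      rw [mul_comm (Real.sqrt v0) _]
      rw [show (2:ℝ) ^ (((K:ℝ) + 1) * a) * ((2:ℝ) ^ ((1:ℝ) - a) * Real.sqrt v0 * (2:ℝ) ^ (((1:ℝ)/2 - a) * K)) = ((2:ℝ) ^ (((K:ℝ) + 1) * a) * (2:ℝ) ^ ((1:ℝ) - a) * (2:ℝ) ^ (((1:ℝ)/2 - a) * K)) * Real.sqrt v0 by ring]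
      rw [← Real.rpow_add two_pos, ← Real.rpow_add two_pos]
      rw [mul_comm]
      congr 1
      ring
    calc Real.sqrt (((2:ℕ) ^ (K + 1) : ℝ) + 1) * Real.sqrt v0
        ≤ (2:ℝ) ^ (((K:ℝ) + 2)/2) * Real.sqrt v0 :=
          mul_le_mul_of_nonneg_right h2 (Real.sqrt_nonneg _)
      _ = (ε K : ℝ) * (C * r ^ K) := by rw [h3]; ring
  have hmeasbd : ∀ K, ℙ (s K) ≤ ENNReal.ofReal (C * r ^ K) := by
    intro K
    have hmax := maximal_ineq habs (fun n ω => abs_nonneg _) (ε := ε K) (n := 2^(K+1))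
    have hIK : ∫ ω in s K, |f (2^(K+1)) ω| ∂ℙ ≤ ∫ ω, |f (2^(K+1)) ω| ∂ℙ :=
      setIntegral_le_integral (habs.integrable _) (ae_of_all _ fun ω => abs_nonneg _)
    have hIK2 : ∫ ω, |f (2^(K+1)) ω| ∂ℙ ≤ (ε K : ℝ) * (C * r ^ K) := by
      refine (hI _).trans ?_
      refine le_trans (le_of_eq ?_) (hkey K)
      rw [Real.sqrt_mul (by positivity)]
      push_cast; ring_nf
    have hchain : (ε K : ℝ≥0∞) * ℙ (s K) ≤ (ε K : ℝ≥0∞) * ENNReal.ofReal (C * r ^ K) := by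
      calc (ε K : ℝ≥0∞) * ℙ (s K) = ε K • ℙ (s K) := by
            rw [ENNReal.smul_def, smul_eq_mul]
        _ ≤ ENNReal.ofReal (∫ ω in s K, |f (2^(K+1)) ω| ∂ℙ) := hmax
        _ ≤ ENNReal.ofReal ((ε K : ℝ) * (C * r ^ K)) :=
            ENNReal.ofReal_le_ofReal (hIK.trans hIK2)
        _ = (ε K : ℝ≥0∞) * ENNReal.ofReal (C * r ^ K) := by
            rw [ENNReal.ofReal_mul (le_of_lt (hεpos K))]
            congr 1
            exact ENNReal.ofReal_coe_nnreal
    have hne : (ε K : ℝ≥0∞) ≠ 0 :=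
      ENNReal.coe_ne_zero.mpr (NNReal.coe_pos.mp (hεpos K)).ne'
    exact (ENNReal.mul_le_mul_iff_right hne ENNReal.coe_ne_top).mp hchain
  have hsum : (∑' K, ℙ (s K)) ≠ ⊤ := by
    have h1 : (∑' K, ENNReal.ofReal (C * r ^ K)) < ⊤ := by
      rw [← ENNReal.ofReal_tsum_of_nonneg (fun K => by positivity)
        ((summable_geometric_of_lt_one hr0 hr1).mul_left C)]
      exact ENNReal.ofReal_lt_top
    exact ne_top_of_le_ne_top h1.ne (ENNReal.tsum_le_tsum hmeasbd)
  filter_upwards [MeasureTheory.ae_eventually_notMem hsum] with ω hω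
  rw [Filter.eventually_atTop] at hω
  obtain ⟨K₀, hK₀⟩ := hω
  rw [Filter.eventually_atTop]
  refine ⟨2 ^ K₀, fun n hn => ?_⟩
  have hn0 : n ≠ 0 := by
    have : (1:ℕ) ≤ 2 ^ K₀ := Nat.one_le_two_pow
    omega
  set K := Nat.log 2 n with hK
  have hK₀K : K₀ ≤ K := (Nat.le_log_iff_pow_le one_lt_two hn0).mpr hn
  have hnK : n < 2 ^ (K + 1) := Nat.lt_pow_succ_log_self one_lt_two n
  have h2K : 2 ^ K ≤ n := Nat.pow_log_le_self 2 hn0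
  have hnotmem := hK₀ K hK₀K
  rw [hs] at hnotmem
  simp only [Set.mem_setOf_eq, not_le] at hnotmem
  rw [Finset.sup'_lt_iff] at hnotmem
  intro k hk
  have hbd : ((2:ℝ) ^ (K+1:ℕ)) ^ a ≤ 2 * (n:ℝ) ^ a := by
    have hc1 : ((2:ℝ) ^ (K+1:ℕ)) ≤ 2 * (n:ℝ) := by
      have : (2:ℕ) ^ (K+1) ≤ 2 * n := by
        calc (2:ℕ) ^ (K+1) = 2 * 2 ^ K := by ring
          _ ≤ 2 * n := by omega
      exact_mod_cast this
    calc ((2:ℝ) ^ (K+1:ℕ)) ^ a ≤ (2 * (n:ℝ)) ^ a :=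
          Real.rpow_le_rpow (by positivity) hc1 (le_of_lt (lt_trans (by norm_num) ha.1))
      _ = 2 ^ a * (n:ℝ) ^ a := Real.mul_rpow (by norm_num) (Nat.cast_nonneg n)
      _ ≤ 2 * (n:ℝ) ^ a := by
          have h2a : (2:ℝ) ^ a ≤ 2 := by
            calc (2:ℝ) ^ a ≤ (2:ℝ) ^ (1:ℝ) :=
              Real.rpow_le_rpow_of_exponent_le one_le_two ha.2.le
              _ = 2 := Real.rpow_one 2
          have : (0:ℝ) ≤ (n:ℝ) ^ a := by positivity
          nlinarith
  rcases k with _ | j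
  · simp only [Finset.range_zero, Finset.sum_empty, abs_zero]
    positivity
  · have hj : j ∈ Finset.range (2 ^ (K + 1) + 1) := by
      rw [Finset.mem_range]; omega
    have := hnotmem j hj
    have : |f j ω| ≤ ((2:ℝ) ^ (K+1:ℕ)) ^ a := le_of_lt this
    calc |∑ i ∈ Finset.range (j+1), X i ω| = |f j ω| := by rw [hf]
      _ ≤ ((2:ℝ) ^ (K+1:ℕ)) ^ a := this
      _ ≤ 2 * (n:ℝ) ^ a := hbd


lemma sq_dist_compare {m q nr ir jr Ti Tj T0 Tn B : ℝ}
    (hq0 : 0 ≤ q) (hqn : q ≤ nr) (h4B : 4 * B ^ 2 ≤ m ^ 2 * (nr * q))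
    (hTi : -B ≤ Ti) (hTi' : Ti ≤ B) (hTj : -B ≤ Tj) (hTj' : Tj ≤ B)
    (h0i : 0 ≤ ir) (hji : jr - ir ≤ nr - q) (hij : ir ≤ jr) :
    (ir - jr) ^ 2 * m ^ 2 + (Ti - Tj) ^ 2 ≤ (0 - nr) ^ 2 * m ^ 2 + (T0 - Tn) ^ 2 := by
  have h1 : (Ti - Tj) ^ 2 ≤ 4 * B ^ 2 := by nlinarith
  have h2 : (jr - ir) ^ 2 ≤ (nr - q) ^ 2 := by nlinarith
  have h3 : (jr - ir) ^ 2 * m ^ 2 ≤ (nr - q) ^ 2 * m ^ 2 :=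
    mul_le_mul_of_nonneg_right h2 (sq_nonneg m)
  have h4 : q * q ≤ nr * q := mul_le_mul_of_nonneg_right hqn hq0
  have h5 : m ^ 2 * (q * q) ≤ m ^ 2 * (nr * q) := mul_le_mul_of_nonneg_left h4 (sq_nonneg m)
  nlinarith [sq_nonneg (T0 - Tn)]

/-- In the degenerate-drift case (`Z·û = ‖μ‖` a.s.), for any `β ∈ (0,1)`, almost
surely, for all but finitely many `n` the diameter of the walk up to time `n` is
attained by a pair of points with indices `i ≤ n^β` and `n − n^β ≤ j ≤ n`. -/
theorem diameter_attained_near_endpoints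
    {Ω : Type*} [MeasureSpace Ω] [IsProbabilityMeasure (ℙ : Measure Ω)]
    (Z : ℕ → Ω → EuclideanSpace ℝ (Fin 2))
    (hmeas : ∀ i, Measurable (Z i))
    (hindep : iIndepFun Z ℙ)
    (hident : ∀ i, IdentDistrib (Z i) (Z 0) ℙ ℙ)
    (hL2 : MemLp (Z 0) 2 ℙ)
    (μ : EuclideanSpace ℝ (Fin 2)) (hμ : μ = ∫ ω, Z 0 ω) (hμ0 : μ ≠ 0)
    (hdegen : ∀ i, ∀ᵐ ω ∂(ℙ : Measure Ω), ⟪Z i ω, ‖μ‖⁻¹ • μ⟫ = ‖μ‖)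
    (β : ℝ) (hβ : β ∈ Set.Ioo (0 : ℝ) 1)
    (S : ℕ → Ω → EuclideanSpace ℝ (Fin 2))
    (hS : ∀ n ω, S n ω = ∑ i ∈ Finset.range n, Z i ω) :
    ∀ᵐ ω ∂(ℙ : Measure Ω), ∀ᶠ n : ℕ in atTop,
      Metric.diam ((fun k => S k ω) '' Set.Iic n) =
        sSup {d : ℝ | ∃ i j : ℕ, (i : ℝ) ≤ (n : ℝ) ^ β ∧
          (n : ℝ) - (n : ℝ) ^ β ≤ (j : ℝ) ∧ j ≤ n ∧
          d = dist (S i ω) (S j ω)} := by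
  obtain ⟨hβ0, hβ1⟩ := hβ
  have hm0 : (0:ℝ) < ‖μ‖ := norm_pos_iff.mpr hμ0
  set m : ℝ := ‖μ‖ with hm
  set u : EuclideanSpace ℝ (Fin 2) := m⁻¹ • μ with hudef
  have hinner : ∀ x y : EuclideanSpace ℝ (Fin 2), ⟪x, y⟫ = x 0 * y 0 + x 1 * y 1 := by
    intro x y
    simp [PiLp.inner_apply, Fin.sum_univ_two, RCLike.inner_apply, mul_comm]
  have hu_norm : ‖u‖ = 1 := by
    rw [hudef, norm_smul, Real.norm_eq_abs, abs_inv, abs_of_pos hm0, ← hm,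
      inv_mul_cancel₀ hm0.ne']
  have hu2 : u 0 ^ 2 + u 1 ^ 2 = 1 := by
    have h1 : ⟪u, u⟫ = 1 := by
      rw [real_inner_self_eq_norm_sq, hu_norm]; norm_num
    rw [hinner u u] at h1; nlinarith
  set w : EuclideanSpace ℝ (Fin 2) :=
    (WithLp.equiv 2 (Fin 2 → ℝ)).symm ![-(u 1), u 0] with hwdef
  have hw0 : w 0 = -(u 1) := by rw [hwdef]; simp
  have hw1 : w 1 = u 0 := by rw [hwdef]; simp
  have pyth : ∀ v : EuclideanSpace ℝ (Fin 2), ‖v‖ ^ 2 = ⟪v, u⟫ ^ 2 + ⟪w, v⟫ ^ 2 := by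
    intro v
    have hv : ⟪v, v⟫ = ‖v‖ ^ 2 := real_inner_self_eq_norm_sq v
    rw [← hv, hinner v v, hinner v u, hinner w v, hw0, hw1]
    linear_combination -(v 0 ^ 2 + v 1 ^ 2) * hu2
  have hu0c : u 0 = m⁻¹ * μ 0 := by rw [hudef]; rfl
  have hu1c : u 1 = m⁻¹ * μ 1 := by rw [hudef]; rfl
  have hwμ : ⟪w, μ⟫ = 0 := by
    rw [hinner w μ, hw0, hw1, hu0c, hu1c]; ring
  set X : ℕ → Ω → ℝ := fun i ω => ⟪w, Z i ω⟫ with hXdef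
  have hXmeas : ∀ i, Measurable (X i) :=
    fun i => ((innerSL ℝ w).continuous.measurable).comp (hmeas i)
  have hXindep : iIndepFun X ℙ := by
    have := hindep.comp (fun _ => ((innerSL ℝ w) : EuclideanSpace ℝ (Fin 2) → ℝ))
      (fun _ => (innerSL ℝ w).continuous.measurable)
    exact this
  have hXident : ∀ i, IdentDistrib (X i) (X 0) ℙ ℙ :=
    fun i => (hident i).comp (innerSL ℝ w).continuous.measurable
  have hXL2 : MemLp (X 0) 2 ℙ := by
    have := (innerSL ℝ w).comp_memLp' hL2
    exact this
  have hXmean : ∫ ω, X 0 ω ∂(ℙ : Measure Ω) = 0 := by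
    have h1 : ∫ ω, (innerSL ℝ w) (Z 0 ω) ∂(ℙ : Measure Ω)
        = (innerSL ℝ w) (∫ ω, Z 0 ω ∂(ℙ : Measure Ω)) :=
      ContinuousLinearMap.integral_comp_comm _ (hL2.integrable one_le_two)
    calc ∫ ω, X 0 ω ∂(ℙ : Measure Ω)
        = (innerSL ℝ w) (∫ ω, Z 0 ω ∂(ℙ : Measure Ω)) := h1
      _ = ⟪w, μ⟫ := by rw [← hμ]; rfl
      _ = 0 := hwμ
  set a : ℝ := 1/2 + β/4 with hadef
  have hA := aux_max_bound X hXmeas hXindep hXident hXL2 hXmean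
    (a := a) ⟨by rw [hadef]; linarith, by rw [hadef]; linarith⟩
  have hdeg' : ∀ᵐ ω ∂(ℙ : Measure Ω), ∀ i, ⟪Z i ω, u⟫ = m := ae_all_iff.mpr hdegen
  have ht : Tendsto (fun n : ℕ => (n:ℝ) ^ (β/2)) atTop atTop :=
    (tendsto_rpow_atTop (by linarith : (0:ℝ) < β/2)).comp tendsto_natCast_atTop_atTop
  have hev2 : ∀ᶠ n : ℕ in atTop, 16 / m ^ 2 ≤ (n:ℝ) ^ (β/2) := ht.eventually_ge_atTop _
  filter_upwards [hA, hdeg'] with ω hω hdegω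
  filter_upwards [hω, eventually_ge_atTop 1, hev2] with n hn h1n h16
  have hn1 : (1:ℝ) ≤ (n:ℝ) := by exact_mod_cast h1n
  have hn0 : (0:ℝ) < (n:ℝ) := by linarith
  set q : ℝ := (n:ℝ) ^ β with hq
  have hq0 : 0 ≤ q := Real.rpow_nonneg (Nat.cast_nonneg n) β
  have hqn : q ≤ (n:ℝ) := by
    calc q ≤ (n:ℝ) ^ (1:ℝ) := Real.rpow_le_rpow_of_exponent_le hn1 hβ1.le
      _ = (n:ℝ) := Real.rpow_one _
  set B : ℝ := 2 * (n:ℝ) ^ a with hB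
  have hB0 : 0 ≤ B := by positivity
  have h4B : 4 * B ^ 2 ≤ m ^ 2 * ((n:ℝ) * q) := by
    have e1 : (n:ℝ) ^ ((1:ℝ)+β) = (n:ℝ) ^ (β/2) * (n:ℝ) ^ (2*a) := by
      rw [← Real.rpow_add hn0]; congr 1; rw [hadef]; ring
    have e2 : (n:ℝ) ^ (2*a) = ((n:ℝ) ^ a) ^ 2 := by
      rw [← Real.rpow_natCast ((n:ℝ) ^ a) 2, ← Real.rpow_mul (le_of_lt hn0)]
      congr 1; push_cast; ring
    have e3 : (n:ℝ) ^ ((1:ℝ)+β) = (n:ℝ) * q := by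
      rw [Real.rpow_add hn0, Real.rpow_one]
    have h16' : 16 ≤ m ^ 2 * (n:ℝ) ^ (β/2) := by
      rw [div_le_iff₀ (by positivity)] at h16; linarith
    calc 4 * B ^ 2 = 16 * ((n:ℝ) ^ a) ^ 2 := by rw [hB]; ring
      _ ≤ (m ^ 2 * (n:ℝ) ^ (β/2)) * ((n:ℝ) ^ a) ^ 2 :=
          mul_le_mul_of_nonneg_right h16' (sq_nonneg _)
      _ = m ^ 2 * ((n:ℝ) ^ ((1:ℝ)+β)) := by rw [e1, e2]; ring
      _ = m ^ 2 * ((n:ℝ) * q) := by rw [e3]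
  have hSu : ∀ k : ℕ, ⟪S k ω, u⟫ = (k:ℝ) * m := by
    intro k
    rw [hS k ω, sum_inner, Finset.sum_congr rfl fun i _ => hdegω i,
      Finset.sum_const, Finset.card_range, nsmul_eq_mul]
  have hSw : ∀ k : ℕ, ⟪w, S k ω⟫ = ∑ i ∈ Finset.range k, X i ω := by
    intro k; rw [hS k ω, inner_sum]
  have hTB : ∀ k, k ≤ n → |⟪w, S k ω⟫| ≤ B := by
    intro k hk; rw [hSw k]; exact hn k hk
  have hdist : ∀ i j : ℕ, dist (S i ω) (S j ω) ^ 2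
      = ((i:ℝ) - (j:ℝ)) ^ 2 * m ^ 2 + (⟪w, S i ω⟫ - ⟪w, S j ω⟫) ^ 2 := by
    intro i j
    rw [dist_eq_norm, pyth (S i ω - S j ω), inner_sub_left, inner_sub_right,
      hSu i, hSu j]
    ring
  -- the target set
  have hd0A : dist (S 0 ω) (S n ω) ∈ {d : ℝ | ∃ i j : ℕ, (i : ℝ) ≤ q ∧
      (n : ℝ) - q ≤ (j : ℝ) ∧ j ≤ n ∧ d = dist (S i ω) (S j ω)} :=
    ⟨0, n, by simpa using hq0, by linarith, le_rfl, rfl⟩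
  have hfin : ((fun k => S k ω) '' Set.Iic n).Finite := (Set.finite_Iic n).image _
  have hbdd := hfin.isBounded
  have himg : ∀ k, k ≤ n → S k ω ∈ (fun k => S k ω) '' Set.Iic n :=
    fun k hk => ⟨k, hk, rfl⟩
  have hAle : ∀ d ∈ {d : ℝ | ∃ i j : ℕ, (i : ℝ) ≤ q ∧
      (n : ℝ) - q ≤ (j : ℝ) ∧ j ≤ n ∧ d = dist (S i ω) (S j ω)},
      d ≤ Metric.diam ((fun k => S k ω) '' Set.Iic n) := by
    rintro d ⟨i, j, hi, hj1, hj2, rfl⟩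
    have hi' : i ≤ n := by
      have : (i:ℝ) ≤ (n:ℝ) := hi.trans hqn
      exact_mod_cast this
    exact Metric.dist_le_diam_of_mem hbdd (himg i hi') (himg j hj2)
  have hAbdd : BddAbove {d : ℝ | ∃ i j : ℕ, (i : ℝ) ≤ q ∧
      (n : ℝ) - q ≤ (j : ℝ) ∧ j ≤ n ∧ d = dist (S i ω) (S j ω)} :=
    ⟨Metric.diam ((fun k => S k ω) '' Set.Iic n), fun d hd => hAle d hd⟩
  have hd0_le : dist (S 0 ω) (S n ω) ≤ sSup {d : ℝ | ∃ i j : ℕ, (i : ℝ) ≤ q ∧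
      (n : ℝ) - q ≤ (j : ℝ) ∧ j ≤ n ∧ d = dist (S i ω) (S j ω)} :=
    le_csSup hAbdd hd0A
  have key : ∀ i j : ℕ, i ≤ j → j ≤ n →
      dist (S i ω) (S j ω) ≤ sSup {d : ℝ | ∃ i j : ℕ, (i : ℝ) ≤ q ∧
        (n : ℝ) - q ≤ (j : ℝ) ∧ j ≤ n ∧ d = dist (S i ω) (S j ω)} := by
    intro i j hij hjn
    by_cases hc : (i:ℝ) ≤ q ∧ (n:ℝ) - q ≤ (j:ℝ)
    · exact le_csSup hAbdd ⟨i, j, hc.1, hc.2, hjn, rfl⟩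
    · refine le_trans ?_ hd0_le
      have hTi := abs_le.mp (hTB i (hij.trans hjn))
      have hTj := abs_le.mp (hTB j hjn)
      have hT0 := abs_le.mp (hTB 0 (Nat.zero_le n))
      have hTn := abs_le.mp (hTB n le_rfl)
      have hijr : (i:ℝ) ≤ (j:ℝ) := by exact_mod_cast hij
      have hjnr : (j:ℝ) ≤ (n:ℝ) := by exact_mod_cast hjn
      have hir : (0:ℝ) ≤ (i:ℝ) := Nat.cast_nonneg i
      have hji : (j:ℝ) - (i:ℝ) ≤ (n:ℝ) - q := by
        push_neg at hc
        rcases le_or_gt (i:ℝ) q with h | h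
        · have := hc h
          linarith
        · linarith
      have h1 : dist (S i ω) (S j ω) ^ 2 ≤ dist (S 0 ω) (S n ω) ^ 2 := by
        rw [hdist i j, hdist 0 n]
        push_cast
        exact sq_dist_compare hq0 hqn h4B hTi.1 hTi.2 hTj.1 hTj.2 hir hji hijr
      have h2 := Real.sqrt_le_sqrt h1
      rwa [Real.sqrt_sq dist_nonneg, Real.sqrt_sq dist_nonneg] at h2
  refine le_antisymm ?_ (Real.sSup_le hAle Metric.diam_nonneg)
  refine Metric.diam_le_of_forall_dist_le (le_trans dist_nonneg hd0_le) ?_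
  rintro x ⟨i, hi, rfl⟩ y ⟨j, hj, rfl⟩
  rw [Set.mem_Iic] at hi hj
  rcases le_total i j with h | h
  · exact key i j h hj
  · rw [dist_comm]; exact key j i h hi
end
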